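/- arXiv:1109.2808 — 5 statements merged into one kernel-verified Lean document; each statement's English description precedes it below -/
import Mathlib

section
/- Let N ≥ 2 and 1 < q < 2, and set C₄(q) = (q−1)^{(q−2)/(q−1)} · (2−q)^{−1}. Let Ω ⊆ ℝ^N be a bounded open set with 0 ∈ ∂Ω. Suppose u is continuous on (closure of Ω) \ {0}, twice continuously differentiable on Ω, satisfies Δu(x) = ‖∇u(x)‖^q for all x ∈ Ω, and u(x) = 0 for all x ∈ ∂Ω \ {0}. Then u(x) ≤ C₄(q) · ‖x‖^{(q−2)/(q−1)} for every x ∈ Ω. -/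
open Metric Set

/-- The Laplacian of `u : ℝ^N → ℝ`, as the sum of the second partial derivatives. -/
noncomputable def lap {N : ℕ} (u : EuclideanSpace ℝ (Fin N) → ℝ)
    (x : EuclideanSpace ℝ (Fin N)) : ℝ :=
  ∑ i : Fin N, fderiv ℝ (fun y => fderiv ℝ u y (EuclideanSpace.single i 1)) x
    (EuclideanSpace.single i 1)

open Filter Topology

section Aux

/-- 1-D second derivative test at a local max. -/
lemma sd_test {g g' : ℝ → ℝ} {D : ℝ}
    (hg : ∀ᶠ t in 𝓝 (0:ℝ), HasDerivAt g (g' t) t)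
    (hg' : HasDerivAt g' D 0)
    (hmax : IsLocalMax g 0) : D ≤ 0 := by
  by_contra hD
  push_neg at hD
  have h0 : g' 0 = 0 := hmax.hasDerivAt_eq_zero hg.self_of_nhds
  have hslope : Tendsto (slope g' 0) (𝓝[≠] 0) (𝓝 D) := hasDerivAt_iff_tendsto_slope.mp hg'
  have hpos : ∀ᶠ t in 𝓝[≠] (0:ℝ), 0 < slope g' 0 t :=
    hslope.eventually (eventually_gt_nhds hD)
  have hpos' : ∀ᶠ t in 𝓝[>] (0:ℝ), 0 < g' t := by
    have h1 : ∀ᶠ t in 𝓝[>] (0:ℝ), 0 < slope g' 0 t :=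
      hpos.filter_mono (nhdsWithin_mono 0 (fun t ht => ne_of_gt ht))
    filter_upwards [h1, self_mem_nhdsWithin] with t ht ht0
    have hs : slope g' 0 t = g' t / t := by simp [slope_def_field, h0]
    rw [hs] at ht
    have := mul_pos ht (show (0:ℝ) < t from ht0)
    rwa [div_mul_cancel₀ _ (ne_of_gt (show (0:ℝ) < t from ht0))] at this
  obtain ⟨ε₀, hε₀, hderiv⟩ := Metric.eventually_nhds_iff.mp hg
  obtain ⟨ε₁, hε₁, hgpos⟩ := mem_nhdsGT_iff_exists_Ioo_subset.mp hpos'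
  obtain ⟨ε₂, hε₂, hle⟩ := Metric.eventually_nhds_iff.mp hmax
  have hε₁' : 0 < ε₁ := mem_Ioi.mp hε₁
  set t := min (min ε₀ ε₁) ε₂ / 2 with htdef
  have htpos : 0 < t := by positivity
  have ht0 : t < ε₀ := by
    have h1 : min (min ε₀ ε₁) ε₂ ≤ ε₀ := le_trans (min_le_left _ _) (min_le_left _ _)
    have h2 : t < min (min ε₀ ε₁) ε₂ := by
      rw [htdef]; exact half_lt_self (by positivity)
    linarith
  have ht1 : t < ε₁ := by
    have h1 : min (min ε₀ ε₁) ε₂ ≤ ε₁ := le_trans (min_le_left _ _) (min_le_right _ _)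
    have h2 : t < min (min ε₀ ε₁) ε₂ := by
      rw [htdef]; exact half_lt_self (by positivity)
    linarith
  have ht2 : t < ε₂ := by
    have h1 : min (min ε₀ ε₁) ε₂ ≤ ε₂ := min_le_right _ _
    have h2 : t < min (min ε₀ ε₁) ε₂ := by
      rw [htdef]; exact half_lt_self (by positivity)
    linarith
  have hcont : ContinuousOn g (Icc 0 t) := by
    intro s hs
    have : |s| < ε₀ := by
      rw [abs_of_nonneg hs.1]; exact lt_of_le_of_lt hs.2 ht0
    have h2 := hderiv (show dist s 0 < ε₀ by simpa [Real.dist_eq] using this)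
    exact h2.continuousAt.continuousWithinAt
  have hd : ∀ s ∈ Ioo 0 t, HasDerivAt g (g' s) s := by
    intro s hs
    have : |s| < ε₀ := by
      rw [abs_of_nonneg hs.1.le]; exact lt_trans hs.2 ht0
    exact hderiv (show dist s 0 < ε₀ by simpa [Real.dist_eq] using this)
  obtain ⟨c, hc, hceq⟩ := exists_hasDerivAt_eq_slope g g' htpos hcont hd
  have hgc : 0 < g' c := hgpos ⟨hc.1, lt_trans hc.2 ht1⟩
  have hgt : g t ≤ g 0 := hle (show dist t 0 < ε₂ by simpa [Real.dist_eq, abs_of_pos htpos] using ht2)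
  rw [hceq] at hgc
  have : (g t - g 0) / (t - 0) ≤ 0 :=
    div_nonpos_of_nonpos_of_nonneg (by linarith) (by linarith)
  linarith

/-- Second directional derivative is nonpositive at a local max. -/
lemma dir2_nonpos {E : Type*} [NormedAddCommGroup E] [NormedSpace ℝ E]
    {f : E → ℝ} {x : E} (e : E)
    (hf : ∀ᶠ y in 𝓝 x, DifferentiableAt ℝ f y)
    (hf2 : DifferentiableAt ℝ (fun y => fderiv ℝ f y e) x)
    (hmax : IsLocalMax f x) :
    fderiv ℝ (fun y => fderiv ℝ f y e) x e ≤ 0 := by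
  have hL : ∀ t : ℝ, HasDerivAt (fun t : ℝ => x + t • e) e t := by
    intro t
    simpa using ((hasDerivAt_id t).smul_const e).const_add x
  have hL0 : x + (0:ℝ) • e = x := by simp
  have htend : Tendsto (fun t : ℝ => x + t • e) (𝓝 0) (𝓝 x) := by
    have : Continuous fun t : ℝ => x + t • e := by continuity
    have h : Tendsto (fun t : ℝ => x + t • e) (𝓝 0) (𝓝 ((fun t : ℝ => x + t • e) 0)) :=
      this.continuousAt (x := (0:ℝ))
    simpa using h
  apply sd_test (g := fun t => f (x + t • e)) (g' := fun t => fderiv ℝ f (x + t • e) e)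
  · filter_upwards [htend.eventually hf] with t ht
    exact ht.hasFDerivAt.comp_hasDerivAt t (hL t)
  · have h2 : HasFDerivAt (fun y => fderiv ℝ f y e)
        (fderiv ℝ (fun y => fderiv ℝ f y e) x) (x + (0:ℝ) • e) := by
      rw [hL0]; exact hf2.hasFDerivAt
    exact h2.comp_hasDerivAt 0 (hL 0)
  · have h := htend.eventually hmax
    refine h.mono fun t ht => ?_
    simpa [hL0] using ht

/-- Comparison with a strict supersolution. -/
lemma comparison {N : ℕ} {q : ℝ} {E : Set (EuclideanSpace ℝ (Fin N))}
    (hEo : IsOpen E) (hEb : Bornology.IsBounded E)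
    {u w : EuclideanSpace ℝ (Fin N) → ℝ}
    (hu : ∀ y ∈ E, ContDiffAt ℝ 2 u y)
    (hw : ∀ y ∈ E, ContDiffAt ℝ 2 w y)
    (hcu : ContinuousOn u (closure E)) (hcw : ContinuousOn w (closure E))
    (hequ : ∀ y ∈ E, lap u y = ‖gradient u y‖ ^ q)
    (hsw : ∀ y ∈ E, lap w y < ‖gradient w y‖ ^ q)
    (hbdry : ∀ y ∈ frontier E, u y ≤ w y) :
    ∀ y ∈ E, u y ≤ w y := by
  rcases E.eq_empty_or_nonempty with rfl | hne
  · simp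
  by_contra hcon
  push_neg at hcon
  obtain ⟨z, hz, hzlt⟩ := hcon
  set f : EuclideanSpace ℝ (Fin N) → ℝ := fun y => u y - w y with hfdef
  have hKcp : IsCompact (closure E) :=
    Metric.isCompact_of_isClosed_isBounded isClosed_closure hEb.closure
  have hfc : ContinuousOn f (closure E) := hcu.sub hcw
  obtain ⟨y₀, hy₀K, hy₀max⟩ := hKcp.exists_isMaxOn hne.closure hfc
  have hfy₀pos : 0 < f y₀ :=
    lt_of_lt_of_le (sub_pos.mpr hzlt) (hy₀max (subset_closure hz))
  have hy₀E : y₀ ∈ E := by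
    by_contra h
    have hfr : y₀ ∈ frontier E := by
      rw [frontier, hEo.interior_eq]
      exact ⟨hy₀K, h⟩
    have := hbdry y₀ hfr
    have : f y₀ ≤ 0 := sub_nonpos.mpr this
    linarith
  have hmax : IsLocalMax f y₀ :=
    hy₀max.isLocalMax (mem_of_superset (hEo.mem_nhds hy₀E) subset_closure)
  have hud : DifferentiableAt ℝ u y₀ := (hu y₀ hy₀E).differentiableAt two_ne_zero
  have hwd : DifferentiableAt ℝ w y₀ := (hw y₀ hy₀E).differentiableAt two_ne_zero
  have hgrad : gradient u y₀ = gradient w y₀ := by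
    have h1 : fderiv ℝ f y₀ = 0 := hmax.fderiv_eq_zero
    have h2 : fderiv ℝ f y₀ = fderiv ℝ u y₀ - fderiv ℝ w y₀ := fderiv_sub hud hwd
    have h3 : fderiv ℝ u y₀ = fderiv ℝ w y₀ := by
      rw [h2] at h1; exact sub_eq_zero.mp h1
    simp [gradient, h3]
  have hevu : ∀ᶠ y in 𝓝 y₀, DifferentiableAt ℝ u y :=
    ((hu y₀ hy₀E).eventually (by simp)).mono fun y hy => hy.differentiableAt two_ne_zero
  have hevw : ∀ᶠ y in 𝓝 y₀, DifferentiableAt ℝ w y :=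
    ((hw y₀ hy₀E).eventually (by simp)).mono fun y hy => hy.differentiableAt two_ne_zero
  have hevf : ∀ᶠ y in 𝓝 y₀, DifferentiableAt ℝ f y :=
    (hevu.and hevw).mono fun y hy => hy.1.sub hy.2
  have key : ∀ i : Fin N,
      fderiv ℝ (fun y => fderiv ℝ u y (EuclideanSpace.single i 1)) y₀ (EuclideanSpace.single i 1)
      - fderiv ℝ (fun y => fderiv ℝ w y (EuclideanSpace.single i 1)) y₀
          (EuclideanSpace.single i 1) ≤ 0 := by
    intro i
    set e := EuclideanSpace.single i (1:ℝ) with hedef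
    have hfu1 : DifferentiableAt ℝ (fun y => fderiv ℝ u y e) y₀ :=
      (((hu y₀ hy₀E).fderiv_right (by norm_num)).differentiableAt one_ne_zero).clm_apply
        (differentiableAt_const e)
    have hfw1 : DifferentiableAt ℝ (fun y => fderiv ℝ w y e) y₀ :=
      (((hw y₀ hy₀E).fderiv_right (by norm_num)).differentiableAt one_ne_zero).clm_apply
        (differentiableAt_const e)
    have hev : (fun y => fderiv ℝ f y e) =ᶠ[𝓝 y₀]
        fun y => fderiv ℝ u y e - fderiv ℝ w y e := by
      filter_upwards [hevu, hevw] with y h1 h2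
      rw [hfdef]
      rw [fderiv_fun_sub h1 h2]
      rfl
    have hdiff2f : DifferentiableAt ℝ (fun y => fderiv ℝ f y e) y₀ := by
      rw [hev.differentiableAt_iff]
      exact hfu1.sub hfw1
    have h2f := dir2_nonpos e hevf hdiff2f hmax
    have heq2 : fderiv ℝ (fun y => fderiv ℝ f y e) y₀ e
        = fderiv ℝ (fun y => fderiv ℝ u y e) y₀ e
          - fderiv ℝ (fun y => fderiv ℝ w y e) y₀ e := by
      rw [hev.fderiv_eq, fderiv_fun_sub hfu1 hfw1]
      rfl
    rw [heq2] at h2f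
    exact h2f
  have hlap : lap u y₀ ≤ lap w y₀ := by
    have hsum : lap u y₀ - lap w y₀
        = ∑ i : Fin N,
          (fderiv ℝ (fun y => fderiv ℝ u y (EuclideanSpace.single i 1)) y₀
              (EuclideanSpace.single i 1)
            - fderiv ℝ (fun y => fderiv ℝ w y (EuclideanSpace.single i 1)) y₀
              (EuclideanSpace.single i 1)) := by
      rw [lap, lap, ← Finset.sum_sub_distrib]
    have : lap u y₀ - lap w y₀ ≤ 0 := by
      rw [hsum]
      exact Finset.sum_nonpos fun i _ => key i
    linarith
  have h1 := hsw y₀ hy₀E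
  have h2 := hequ y₀ hy₀E
  rw [hgrad] at h2
  linarith

/-! ### The barrier function -/

noncomputable section

/-- squared norm as a sum -/
def Sfun {N : ℕ} (y : EuclideanSpace ℝ (Fin N)) : ℝ := ∑ i, y i * y i

/-- derivative of Sfun -/
def SD {N : ℕ} (y : EuclideanSpace ℝ (Fin N)) : EuclideanSpace ℝ (Fin N) →L[ℝ] ℝ :=
  ∑ i, (2 * y i) • (EuclideanSpace.proj i : EuclideanSpace ℝ (Fin N) →L[ℝ] ℝ)

def G (c β δ : ℝ) (s : ℝ) : ℝ := c * (Real.sqrt s - δ) ^ β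

def G₁ (c β δ : ℝ) (s : ℝ) : ℝ :=
  c * ((2 * Real.sqrt s)⁻¹ * β * (Real.sqrt s - δ) ^ (β - 1))

def G₂ (c β δ : ℝ) (s : ℝ) : ℝ :=
  c * β * (β - 1) * (Real.sqrt s - δ) ^ (β - 2) / (4 * s)
    - c * β * (Real.sqrt s - δ) ^ (β - 1) / (4 * s * Real.sqrt s)

def W (c β δ : ℝ) {N : ℕ} (y : EuclideanSpace ℝ (Fin N)) : ℝ := c * (‖y‖ - δ) ^ β

end

lemma Sfun_hasFDerivAt {N : ℕ} (y : EuclideanSpace ℝ (Fin N)) :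
    HasFDerivAt Sfun (SD y) y := by
  have h : ∀ i : Fin N, HasFDerivAt (fun y : EuclideanSpace ℝ (Fin N) => y i * y i)
      ((2 * y i) • (EuclideanSpace.proj i : EuclideanSpace ℝ (Fin N) →L[ℝ] ℝ)) y := by
    intro i
    have hp : HasFDerivAt (fun y : EuclideanSpace ℝ (Fin N) => y i)
        (EuclideanSpace.proj i : EuclideanSpace ℝ (Fin N) →L[ℝ] ℝ) y :=
      (EuclideanSpace.proj i : EuclideanSpace ℝ (Fin N) →L[ℝ] ℝ).hasFDerivAt
    have := hp.fun_mul hp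
    refine this.congr_fderiv ?_
    ext v
    simp
    ring
  exact HasFDerivAt.fun_sum fun i _ => h i

lemma SD_single {N : ℕ} (y : EuclideanSpace ℝ (Fin N)) (i : Fin N) :
    SD y (EuclideanSpace.single i (1:ℝ)) = 2 * y i := by
  simp [SD, EuclideanSpace.single_apply]

lemma SD_apply {N : ℕ} (y v : EuclideanSpace ℝ (Fin N)) :
    SD y v = ∑ i, 2 * y i * v i := by
  simp [SD]

lemma norm_eq_sqrt_Sfun {N : ℕ} (y : EuclideanSpace ℝ (Fin N)) :
    ‖y‖ = Real.sqrt (Sfun y) := by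
  rw [EuclideanSpace.norm_eq, Sfun]
  congr 1
  refine Finset.sum_congr rfl fun i _ => ?_
  rw [Real.norm_eq_abs, sq_abs, sq]

lemma Sfun_nonneg {N : ℕ} (y : EuclideanSpace ℝ (Fin N)) : 0 ≤ Sfun y :=
  Finset.sum_nonneg fun i _ => mul_self_nonneg _

lemma hG1 {c β δ : ℝ} (hδ : 0 ≤ δ) {s : ℝ} (hs : δ < Real.sqrt s) :
    HasDerivAt (G c β δ) (G₁ c β δ s) s := by
  have h0 : 0 < Real.sqrt s := lt_of_le_of_lt hδ hs
  have hs0 : 0 < s := Real.sqrt_pos.mp h0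
  have h1 : HasDerivAt (fun t => Real.sqrt t - δ) (1 / (2 * Real.sqrt s)) s :=
    (Real.hasDerivAt_sqrt hs0.ne').sub_const δ
  have h2 := h1.rpow_const (p := β) (Or.inl (ne_of_gt (sub_pos.mpr hs)))
  have h3 := h2.const_mul c
  refine h3.congr_deriv ?_
  rw [G₁, one_div]

lemma hG2 {c β δ : ℝ} (hδ : 0 ≤ δ) {s : ℝ} (hs : δ < Real.sqrt s) :
    HasDerivAt (G₁ c β δ) (G₂ c β δ s) s := by
  have h0 : 0 < Real.sqrt s := lt_of_le_of_lt hδ hs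
  have hs0 : 0 < s := Real.sqrt_pos.mp h0
  have hinv : HasDerivAt (fun t => (2 * Real.sqrt t)⁻¹)
      (-(2 * (1 / (2 * Real.sqrt s))) / (2 * Real.sqrt s) ^ 2) s :=
    ((Real.hasDerivAt_sqrt hs0.ne').const_mul 2).inv (by positivity)
  have hpow : HasDerivAt (fun t => (Real.sqrt t - δ) ^ (β - 1))
      ((1 / (2 * Real.sqrt s)) * (β - 1) * (Real.sqrt s - δ) ^ (β - 1 - 1)) s :=
    ((Real.hasDerivAt_sqrt hs0.ne').sub_const δ).rpow_const
      (Or.inl (ne_of_gt (sub_pos.mpr hs)))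
  have hmul := ((hinv.mul_const β).mul hpow).const_mul c
  refine hmul.congr_deriv ?_
  rw [G₂, show β - 1 - 1 = β - 2 from by ring]
  set r := Real.sqrt s with hrdef
  have hsr : s = r ^ 2 := (Real.sq_sqrt hs0.le).symm
  have hr0 : 0 < r := h0
  have hrδ : (0:ℝ) < r - δ := sub_pos.mpr hs
  rw [hsr]
  have e2 : (r - δ) ^ (β - 2) = (r - δ) ^ (β - 1) / (r - δ) := by
    rw [show β - 2 = β - 1 - 1 from by ring, Real.rpow_sub hrδ, Real.rpow_one]
  rw [e2]
  field_simp
  ring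

lemma W_eq_G_comp {N : ℕ} (c β δ : ℝ) :
    (W c β δ : EuclideanSpace ℝ (Fin N) → ℝ) = fun y => G c β δ (Sfun y) := by
  funext y
  rw [W, G, ← norm_eq_sqrt_Sfun]

lemma W_hasFDerivAt {c β δ : ℝ} (hδ : 0 ≤ δ) {N : ℕ} {y : EuclideanSpace ℝ (Fin N)}
    (hy : δ < ‖y‖) :
    HasFDerivAt (W c β δ) (G₁ c β δ (Sfun y) • SD y) y := by
  rw [W_eq_G_comp]
  have hs : δ < Real.sqrt (Sfun y) := by rw [← norm_eq_sqrt_Sfun]; exact hy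
  exact (hG1 hδ hs).comp_hasFDerivAt y (Sfun_hasFDerivAt y)

lemma W_hasGradientAt {c β δ : ℝ} (hδ : 0 ≤ δ) {N : ℕ} {y : EuclideanSpace ℝ (Fin N)}
    (hy : δ < ‖y‖) :
    HasGradientAt (W c β δ) ((2 * G₁ c β δ (Sfun y)) • y) y := by
  rw [hasGradientAt_iff_hasFDerivAt]
  have key : (InnerProductSpace.toDual ℝ (EuclideanSpace ℝ (Fin N)))
      ((2 * G₁ c β δ (Sfun y)) • y) = G₁ c β δ (Sfun y) • SD y := by
    apply ContinuousLinearMap.ext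
    intro v
    rw [InnerProductSpace.toDual_apply_apply]
    rw [ContinuousLinearMap.smul_apply, SD_apply]
    rw [PiLp.inner_apply]
    simp only [RCLike.inner_apply, conj_trivial, PiLp.smul_apply, smul_eq_mul]
    rw [Finset.mul_sum]
    refine Finset.sum_congr rfl fun i _ => ?_
    ring
  convert (W_hasFDerivAt hδ hy).hasGradientAt.hasFDerivAt using 2
  rw [← key, LinearIsometryEquiv.symm_apply_apply]

lemma W_lap {c β δ : ℝ} (hδ : 0 ≤ δ) {N : ℕ} {y : EuclideanSpace ℝ (Fin N)}
    (hy : δ < ‖y‖) :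
    lap (W c β δ) y = 2 * N * G₁ c β δ (Sfun y) + 4 * Sfun y * G₂ c β δ (Sfun y) := by
  have hU : IsOpen {y' : EuclideanSpace ℝ (Fin N) | δ < ‖y'‖} :=
    isOpen_lt continuous_const continuous_norm
  have hterm : ∀ i : Fin N,
      fderiv ℝ (fun y' => fderiv ℝ (W c β δ) y' (EuclideanSpace.single i 1)) y
        (EuclideanSpace.single i 1)
      = 2 * G₁ c β δ (Sfun y) + (2 * y i) * (G₂ c β δ (Sfun y) * (2 * y i)) := by
    intro i
    have hev : (fun y' => fderiv ℝ (W c β δ) y' (EuclideanSpace.single i 1)) =ᶠ[𝓝 y]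
        fun y' => G₁ c β δ (Sfun y') * (2 * y' i) := by
      filter_upwards [hU.mem_nhds hy] with y' hy'
      rw [(W_hasFDerivAt hδ hy').fderiv, ContinuousLinearMap.smul_apply, SD_single,
        smul_eq_mul]
    rw [hev.fderiv_eq]
    have hs' : δ < Real.sqrt (Sfun y) := by rw [← norm_eq_sqrt_Sfun]; exact hy
    have hc : HasFDerivAt (fun y' : EuclideanSpace ℝ (Fin N) => G₁ c β δ (Sfun y'))
        (G₂ c β δ (Sfun y) • SD y) y :=
      (hG2 hδ hs').comp_hasFDerivAt y (Sfun_hasFDerivAt y)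
    have hd : HasFDerivAt (fun y' : EuclideanSpace ℝ (Fin N) => 2 * y' i)
        ((2:ℝ) • (EuclideanSpace.proj i : EuclideanSpace ℝ (Fin N) →L[ℝ] ℝ)) y :=
      (EuclideanSpace.proj i : EuclideanSpace ℝ (Fin N) →L[ℝ] ℝ).hasFDerivAt.const_mul 2
    rw [(hc.fun_mul hd).fderiv]
    simp only [ContinuousLinearMap.add_apply, ContinuousLinearMap.smul_apply, SD_single,
      smul_eq_mul]
    have : (EuclideanSpace.proj i : EuclideanSpace ℝ (Fin N) →L[ℝ] ℝ)
        (EuclideanSpace.single i (1:ℝ)) = 1 := by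
      simp [EuclideanSpace.single_apply]
    rw [this]
    ring
  rw [lap, Finset.sum_congr rfl fun i _ => hterm i, Finset.sum_add_distrib,
    Finset.sum_const, Finset.card_univ, Fintype.card_fin]
  have h2 : ∑ i : Fin N, (2 * y i) * (G₂ c β δ (Sfun y) * (2 * y i))
      = 4 * Sfun y * G₂ c β δ (Sfun y) := by
    rw [show (Sfun y : ℝ) = ∑ i, y i * y i from rfl]
    have hterm2 : ∀ i : Fin N, 2 * y i * (G₂ c β δ (∑ i, y i * y i) * (2 * y i))
        = (y i * y i) * (4 * G₂ c β δ (∑ i, y i * y i)) := fun i => by ring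
    rw [Finset.sum_congr rfl fun i _ => hterm2 i, ← Finset.sum_mul]
    ring
  rw [h2]
  push_cast
  ring

lemma W_contDiffAt {c β δ : ℝ} (hδ : 0 ≤ δ) {N : ℕ} {y : EuclideanSpace ℝ (Fin N)}
    (hy : δ < ‖y‖) : ContDiffAt ℝ 2 (W c β δ) y := by
  have hy0 : y ≠ 0 := by
    intro h
    rw [h, norm_zero] at hy
    exact absurd (lt_of_le_of_lt hδ hy) (lt_irrefl 0)
  have h1 : ContDiffAt ℝ 2 (fun y' : EuclideanSpace ℝ (Fin N) => ‖y'‖ - δ) y :=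
    (contDiffAt_norm (𝕜 := ℝ) hy0).sub contDiffAt_const
  have h2 : ContDiffAt ℝ 2 (fun y' : EuclideanSpace ℝ (Fin N) => (‖y'‖ - δ) ^ β) y :=
    h1.rpow_const_of_ne (ne_of_gt (sub_pos.mpr hy))
  exact h2.const_smul c

lemma W_strict {N : ℕ} (hN : 2 ≤ N) {q c β δ : ℝ} (hq1 : 1 < q) (hq2 : q < 2)
    (hβ : β = (q-2)/(q-1)) (hc : c = (q-1) ^ ((q-2)/(q-1)) * (2-q)⁻¹)
    (hδ : 0 ≤ δ) {y : EuclideanSpace ℝ (Fin N)} (hy : δ < ‖y‖) :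
    lap (W c β δ) y < ‖gradient (W c β δ) y‖ ^ q := by
  have hq1' : (0:ℝ) < q - 1 := by linarith
  have hq2' : (0:ℝ) < 2 - q := by linarith
  have hβneg : β < 0 := by rw [hβ]; exact div_neg_of_neg_of_pos (by linarith) hq1'
  have hcpos : 0 < c := by rw [hc]; positivity
  have hr : 0 < ‖y‖ := lt_of_le_of_lt hδ hy
  have htpos : 0 < ‖y‖ - δ := sub_pos.mpr hy
  have hs : Real.sqrt (Sfun y) = ‖y‖ := (norm_eq_sqrt_Sfun y).symm
  have hsval : Sfun y = ‖y‖ ^ 2 := by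
    rw [← hs]; exact (Real.sq_sqrt (Sfun_nonneg y)).symm
  have hG1v : G₁ c β δ (Sfun y) = c * β * (‖y‖ - δ) ^ (β-1) / (2 * ‖y‖) := by
    rw [G₁, hs]; field_simp
  have hgrad : gradient (W c β δ) y = (2 * G₁ c β δ (Sfun y)) • y :=
    (W_hasGradientAt hδ hy).gradient
  have hpow1 : (0:ℝ) < (‖y‖ - δ) ^ (β-1) := Real.rpow_pos_of_pos htpos _
  have hpow2 : (0:ℝ) < (‖y‖ - δ) ^ (β-2) := Real.rpow_pos_of_pos htpos _
  have hgnorm : ‖gradient (W c β δ) y‖ = c * (-β) * (‖y‖ - δ) ^ (β-1) := by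
    rw [hgrad, norm_smul, Real.norm_eq_abs, hG1v]
    have hval : 2 * (c * β * (‖y‖ - δ) ^ (β-1) / (2 * ‖y‖)) ≤ 0 := by
      apply mul_nonpos_of_nonneg_of_nonpos (by norm_num)
      apply div_nonpos_of_nonpos_of_nonneg _ (by positivity)
      exact (mul_neg_of_neg_of_pos (mul_neg_of_pos_of_neg hcpos hβneg) hpow1).le
    rw [abs_of_nonpos hval]
    field_simp
  have hlap : lap (W c β δ) y = c * β * (β-1) * (‖y‖ - δ) ^ (β-2)
      + (N - 1) * (c * β * (‖y‖ - δ) ^ (β-1)) / ‖y‖ := by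
    rw [W_lap hδ hy, hG1v, G₂, hs, hsval]
    field_simp
    ring
  have hA : c * (-β) = (q-1) ^ (β - 1) := by
    rw [Real.rpow_sub hq1', Real.rpow_one, hc, hβ]
    field_simp; ring
  have hB : c * β * (β - 1) = (q-1) ^ (β - 2) := by
    have h1 : c * β * (β - 1) = (c * (-β)) * (1 - β) := by ring
    have h2 : 1 - β = 1 / (q-1) := by rw [hβ]; field_simp; norm_num
    have h3 : (q-1) ^ (β - 2) = (q-1) ^ (β - 1) / (q-1) := by
      rw [show β - 2 = (β - 1) - 1 from by ring, Real.rpow_sub hq1', Real.rpow_one]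
    rw [h1, hA, h2, h3, mul_one_div]
  have hqq : (β - 1) * q = β - 2 := by rw [hβ]; field_simp; ring
  have hC : (c * (-β) * (‖y‖ - δ) ^ (β-1)) ^ q = (q-1) ^ (β-2) * (‖y‖ - δ) ^ (β-2) := by
    rw [Real.mul_rpow (by nlinarith) hpow1.le, hA, ← Real.rpow_mul hq1'.le,
      ← Real.rpow_mul htpos.le, hqq]
  have hneg : (N - 1 : ℝ) * (c * β * (‖y‖ - δ) ^ (β-1)) / ‖y‖ < 0 := by
    apply div_neg_of_neg_of_pos _ hr
    have h1 : c * β * (‖y‖ - δ) ^ (β-1) < 0 := by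
      apply mul_neg_of_neg_of_pos _ hpow1
      exact mul_neg_of_pos_of_neg hcpos hβneg
    have hN1 : (1:ℝ) ≤ (N : ℝ) - 1 := by
      have : (2:ℝ) ≤ (N : ℝ) := by exact_mod_cast hN
      linarith
    nlinarith
  rw [hlap, hgnorm, hC, ← hB]
  linarith

end Aux

/-- Upper bound for a solution of `−Δu + |∇u|^q = 0` (`1 < q < 2`) in a bounded open set
with `0 ∈ ∂Ω`, vanishing on `∂Ω \ {0}`:
`u(x) ≤ C₄(q) ‖x‖^{(q−2)/(q−1)}` with `C₄(q) = (q−1)^{(q−2)/(q−1)} (2−q)^{-1}`. -/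
theorem upper_bound_isolated_singularity
    (N : ℕ) (hN : 2 ≤ N) (q : ℝ) (hq1 : 1 < q) (hq2 : q < 2)
    (Ω : Set (EuclideanSpace ℝ (Fin N))) (hΩo : IsOpen Ω) (hΩb : Bornology.IsBounded Ω)
    (h0 : (0 : EuclideanSpace ℝ (Fin N)) ∈ frontier Ω)
    (u : EuclideanSpace ℝ (Fin N) → ℝ)
    (hcont : ContinuousOn u (closure Ω \ {0}))
    (hC2 : ContDiffOn ℝ 2 u Ω)
    (heq : ∀ x ∈ Ω, lap u x = ‖gradient u x‖ ^ q)
    (hbd : ∀ x ∈ frontier Ω, x ≠ 0 → u x = 0) :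
    ∀ x ∈ Ω,
      u x ≤ (q - 1) ^ ((q - 2) / (q - 1)) * (2 - q)⁻¹ * ‖x‖ ^ ((q - 2) / (q - 1)) := by
  intro x hx
  have hq1' : (0:ℝ) < q - 1 := by linarith
  have hq2' : (0:ℝ) < 2 - q := by linarith
  set β : ℝ := (q-2)/(q-1) with hβ
  set c : ℝ := (q-1) ^ ((q-2)/(q-1)) * (2-q)⁻¹ with hc
  have hβneg : β < 0 := by rw [hβ]; exact div_neg_of_neg_of_pos (by linarith) hq1'
  have hcpos : 0 < c := by rw [hc]; positivity
  have hx0 : x ≠ 0 := by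
    intro h
    rw [frontier, hΩo.interior_eq] at h0
    exact h0.2 (h ▸ hx)
  have hxn : 0 < ‖x‖ := norm_pos_iff.mpr hx0
  have hclcomp : IsCompact (closure Ω) :=
    Metric.isCompact_of_isClosed_isBounded isClosed_closure hΩb.closure
  have main : ∀ δ : ℝ, 0 < δ → δ < ‖x‖ → u x ≤ c * (‖x‖ - δ) ^ β := by
    intro δ hδ0 hδx
    set K : Set (EuclideanSpace ℝ (Fin N)) := closure Ω ∩ {y | δ ≤ ‖y‖} with hK
    have hKcp : IsCompact K :=
      hclcomp.inter_right (isClosed_le continuous_const continuous_norm)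
    have hKsub : K ⊆ closure Ω \ {0} := by
      rintro y ⟨h1, h2⟩
      refine ⟨h1, ?_⟩
      simp only [mem_singleton_iff]
      have h2' : δ ≤ ‖y‖ := h2
      intro h
      rw [h, norm_zero] at h2'
      exact absurd (lt_of_lt_of_le hδ0 h2') (lt_irrefl 0)
    have hKu : ContinuousOn u K := hcont.mono hKsub
    obtain ⟨M, hM0, hM⟩ : ∃ M : ℝ, 0 ≤ M ∧ ∀ y ∈ K, u y ≤ M := by
      rcases K.eq_empty_or_nonempty with h | h
      · exact ⟨0, le_refl 0, fun y hy => absurd hy (by simp [h])⟩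
      · obtain ⟨z, hzK, hz⟩ := hKcp.exists_isMaxOn h hKu
        exact ⟨max (u z) 0, le_max_right _ _, fun y hy => le_trans (hz hy) (le_max_left _ _)⟩
    set η : ℝ := min ((‖x‖ - δ)/2) (((M+1)/c) ^ β⁻¹) with hη
    have hA0 : (0:ℝ) < (M+1)/c := by positivity
    have hη0 : 0 < η := lt_min (by linarith) (Real.rpow_pos_of_pos hA0 _)
    have hηbound : M + 1 ≤ c * η ^ β := by
      have h1 : η ≤ ((M+1)/c) ^ β⁻¹ := min_le_right _ _
      have h2 : (((M+1)/c) ^ β⁻¹) ^ β ≤ η ^ β :=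
        Real.rpow_le_rpow_of_nonpos hη0 h1 hβneg.le
      have h3 : (((M+1)/c) ^ β⁻¹) ^ β = (M+1)/c := by
        rw [← Real.rpow_mul hA0.le, inv_mul_cancel₀ (ne_of_lt hβneg), Real.rpow_one]
      rw [h3] at h2
      calc M + 1 = c * ((M+1)/c) := by field_simp
        _ ≤ c * η ^ β := mul_le_mul_of_nonneg_left h2 hcpos.le
    set δ' : ℝ := δ + η with hδ'
    have hδ'0 : 0 < δ' := by rw [hδ']; linarith
    have hδ'x : δ' < ‖x‖ := by
      have : η ≤ (‖x‖ - δ)/2 := min_le_left _ _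
      rw [hδ']; linarith
    have hδδ' : δ < δ' := by rw [hδ']; linarith
    set E : Set (EuclideanSpace ℝ (Fin N)) := Ω ∩ {y | δ' < ‖y‖} with hE
    have hEo : IsOpen E := hΩo.inter (isOpen_lt continuous_const continuous_norm)
    have hEb : Bornology.IsBounded E := hΩb.subset inter_subset_left
    have hclE : closure E ⊆ closure Ω ∩ {y | δ' ≤ ‖y‖} := by
      apply closure_minimal _
        (isClosed_closure.inter (isClosed_le continuous_const continuous_norm))
      rintro y ⟨h1, h2⟩
      exact ⟨subset_closure h1, show δ' ≤ ‖y‖ from le_of_lt h2⟩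
    have hucl : ContinuousOn u (closure E) := by
      apply hcont.mono
      intro y hy
      refine ⟨(hclE hy).1, ?_⟩
      simp only [mem_singleton_iff]
      intro h
      have h2' : δ' ≤ ‖y‖ := (hclE hy).2
      rw [h, norm_zero] at h2'
      linarith
    have hWcl : ContinuousOn (W c β δ) (closure E) := by
      intro y hy
      have h2'' : δ' ≤ ‖y‖ := (hclE hy).2
      have h2 : δ < ‖y‖ := lt_of_lt_of_le hδδ' h2''
      exact ((W_contDiffAt hδ0.le h2).continuousAt).continuousWithinAt
    have hbdryE : ∀ y ∈ frontier E, u y ≤ W c β δ y := by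
      intro y hyf
      have hyE' : y ∉ E := by
        rw [frontier, hEo.interior_eq] at hyf
        exact hyf.2
      have h1 : y ∈ closure Ω := (hclE (frontier_subset_closure hyf)).1
      have h2 : δ' ≤ ‖y‖ := (hclE (frontier_subset_closure hyf)).2
      have hy0 : y ≠ 0 := by
        intro h
        rw [h, norm_zero] at h2
        linarith
      rcases eq_or_lt_of_le h2 with heq' | hlt
      · have hyK : y ∈ K := ⟨h1, show δ ≤ ‖y‖ by rw [← heq']; linarith⟩
        have hWy : W c β δ y = c * η ^ β := by
          rw [W, ← heq', hδ']
          congr 2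
          ring
        calc u y ≤ M := hM y hyK
          _ ≤ M + 1 := by linarith
          _ ≤ c * η ^ β := hηbound
          _ = W c β δ y := hWy.symm
      · have hyΩ : y ∉ Ω := fun hyΩ => hyE' ⟨hyΩ, hlt⟩
        have hyfr : y ∈ frontier Ω := by
          rw [frontier, hΩo.interior_eq]
          exact ⟨h1, hyΩ⟩
        rw [hbd y hyfr hy0, W]
        have : δ < ‖y‖ := lt_of_lt_of_le hδδ' h2
        exact (mul_pos hcpos (Real.rpow_pos_of_pos (by linarith) β)).le
    have hcomp := comparison (q := q) hEo hEb
      (fun y hy => hC2.contDiffAt (hΩo.mem_nhds hy.1))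
      (fun y hy => W_contDiffAt hδ0.le (lt_trans hδδ' (show δ' < ‖y‖ from hy.2)))
      hucl hWcl
      (fun y hy => heq y hy.1)
      (fun y hy => W_strict hN hq1 hq2 hβ hc hδ0.le (lt_trans hδδ' (show δ' < ‖y‖ from hy.2)))
      hbdryE
    have hxE : x ∈ E := ⟨hx, show δ' < ‖x‖ from hδ'x⟩
    have := hcomp x hxE
    rwa [W] at this
  have hlim : Tendsto (fun δ : ℝ => c * (‖x‖ - δ) ^ β) (𝓝[>] 0) (𝓝 (c * ‖x‖ ^ β)) := by
    have hcont0 : ContinuousAt (fun δ : ℝ => c * (‖x‖ - δ) ^ β) 0 := by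
      apply ContinuousAt.mul continuousAt_const
      apply ContinuousAt.rpow_const
      · exact (continuous_const.sub continuous_id).continuousAt
      · left; simpa using hxn.ne'
    have h := hcont0.tendsto
    simp only [sub_zero] at h
    exact h.mono_left nhdsWithin_le_nhds
  have hev : ∀ᶠ δ in 𝓝[>] (0:ℝ), u x ≤ c * (‖x‖ - δ) ^ β := by
    filter_upwards [Ioo_mem_nhdsGT_of_mem ⟨le_refl (0:ℝ), hxn⟩] with δ hδ
    exact main δ hδ.1 hδ.2
  have hfinal := ge_of_tendsto hlim hev
  calc u x ≤ c * ‖x‖ ^ β := hfinal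
    _ = (q - 1) ^ ((q - 2) / (q - 1)) * (2 - q)⁻¹ * ‖x‖ ^ ((q - 2) / (q - 1)) := by
      rw [hc, hβ]
end

section
/- Let N ≥ 2, 1 < q < 2, and 0 < ε < R. Set C₄(q) = (q−1)^{(q−2)/(q−1)} · (2−q)^{−1} and define U on the annulus A = {x ∈ ℝ^N : ε < ‖x‖ < R} by U(x) = C₄(q) · ( (‖x‖ − ε)^{(q−2)/(q−1)} − (R − ε)^{(q−2)/(q−1)} ). Then U is twice continuously differentiable on A and is a supersolution there: −ΔU(x) + ‖∇U(x)‖^q ≥ 0 for every x ∈ A. -/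
open Metric Set

/-- Derivative of the norm on a real inner product space, away from the origin. -/
theorem hasFDerivAt_norm' {E : Type*} [NormedAddCommGroup E] [InnerProductSpace ℝ E]
    {x : E} (hx : x ≠ 0) :
    HasFDerivAt (fun y : E => ‖y‖) (‖x‖⁻¹ • (innerSL ℝ x : E →L[ℝ] ℝ)) x := by
  have hnx : (0:ℝ) < ‖x‖ := norm_pos_iff.mpr hx
  have h1 : HasFDerivAt (fun y : E => ‖y‖ ^ 2) ((2:ℕ) • (innerSL ℝ x : E →L[ℝ] ℝ)) x :=
    (hasStrictFDerivAt_norm_sq x).hasFDerivAt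
  have h2 : HasDerivAt Real.sqrt (1 / (2 * ‖x‖)) (‖x‖ ^ 2) := by
    have := Real.hasDerivAt_sqrt (x := ‖x‖ ^ 2) (by positivity)
    simpa [Real.sqrt_sq (norm_nonneg x)] using this
  have h3 := h2.comp_hasFDerivAt x h1
  have heq : (Real.sqrt ∘ fun y : E => ‖y‖ ^ 2) = fun y : E => ‖y‖ := by
    funext y; exact Real.sqrt_sq (norm_nonneg y)
  rw [heq] at h3
  refine h3.congr_fderiv ?_
  ext y
  simp only [ContinuousLinearMap.smul_apply, smul_eq_mul, ContinuousLinearMap.coe_smul']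
  field_simp
  ring

/-- The radial comparison function
`U(x) = C₄(q) ((‖x‖−ε)^{(q−2)/(q−1)} − (R−ε)^{(q−2)/(q−1)})` is a `C²` supersolution of
`−Δu + |∇u|^q = 0` on the annulus `{ε < ‖x‖ < R}`. -/
theorem radial_supersolution_annulus
    (N : ℕ) (hN : 2 ≤ N) (q : ℝ) (hq1 : 1 < q) (hq2 : q < 2)
    (ε R : ℝ) (hε : 0 < ε) (hεR : ε < R) :
    ContDiffOn ℝ 2
      (fun x : EuclideanSpace ℝ (Fin N) =>
        (q - 1) ^ ((q - 2) / (q - 1)) * (2 - q)⁻¹ *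
          ((‖x‖ - ε) ^ ((q - 2) / (q - 1)) - (R - ε) ^ ((q - 2) / (q - 1))))
      {x : EuclideanSpace ℝ (Fin N) | ε < ‖x‖ ∧ ‖x‖ < R} ∧
    ∀ x : EuclideanSpace ℝ (Fin N), ε < ‖x‖ → ‖x‖ < R →
      0 ≤ -lap (fun x : EuclideanSpace ℝ (Fin N) =>
            (q - 1) ^ ((q - 2) / (q - 1)) * (2 - q)⁻¹ *
              ((‖x‖ - ε) ^ ((q - 2) / (q - 1)) - (R - ε) ^ ((q - 2) / (q - 1)))) x
          + ‖gradient (fun x : EuclideanSpace ℝ (Fin N) =>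
              (q - 1) ^ ((q - 2) / (q - 1)) * (2 - q)⁻¹ *
                ((‖x‖ - ε) ^ ((q - 2) / (q - 1)) - (R - ε) ^ ((q - 2) / (q - 1)))) x‖ ^ q := by
  set α : ℝ := (q - 2) / (q - 1) with hα
  set B : ℝ := q - 1 with hBdef
  have hB : (0:ℝ) < B := by rw [hBdef]; linarith
  have h2q : (0:ℝ) < 2 - q := by linarith
  have hq10 : q - 1 ≠ 0 := by linarith
  set C : ℝ := B ^ α * (2 - q)⁻¹ with hCdef
  have hC : 0 < C := by positivity
  set K : ℝ := (R - ε) ^ α with hKdef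
  set U : EuclideanSpace ℝ (Fin N) → ℝ :=
    fun x => C * ((‖x‖ - ε) ^ α - K) with hUdef
  -- derivative of the one-dimensional profile
  have hg : ∀ r : ℝ, ε < r →
      HasDerivAt (fun t : ℝ => C * ((t - ε) ^ α - K)) (C * (α * (r - ε) ^ (α - 1))) r := by
    intro r hr
    have hs : (0:ℝ) < r - ε := by linarith
    have h1 : HasDerivAt (fun t : ℝ => (t - ε) ^ α) (α * (r - ε) ^ (α - 1)) r := by
      have := (Real.hasDerivAt_rpow_const (x := r - ε) (p := α) (Or.inl hs.ne')).comp r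
        ((hasDerivAt_id r).sub_const ε)
      simpa [Function.comp_def] using this
    exact (h1.sub_const K).const_mul C
  -- Fréchet derivative of U
  have hU : ∀ y : EuclideanSpace ℝ (Fin N), ε < ‖y‖ →
      HasFDerivAt U ((C * (α * (‖y‖ - ε) ^ (α - 1))) •
        (‖y‖⁻¹ • (innerSL ℝ y : EuclideanSpace ℝ (Fin N) →L[ℝ] ℝ))) y := by
    intro y hy
    have hy0 : y ≠ 0 := by intro h; rw [h] at hy; simp at hy; linarith
    exact (hg ‖y‖ hy).comp_hasFDerivAt y (hasFDerivAt_norm' hy0)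
  have hopen : IsOpen {y : EuclideanSpace ℝ (Fin N) | ε < ‖y‖} :=
    isOpen_lt continuous_const continuous_norm
  constructor
  · -- smoothness
    intro x hx
    obtain ⟨hx1, _⟩ := hx
    apply ContDiffAt.contDiffWithinAt
    have hx0 : x ≠ 0 := by intro h; rw [h] at hx1; simp at hx1; linarith
    have hs : (0:ℝ) < ‖x‖ - ε := by linarith
    have hnorm : ContDiffAt ℝ 2 (fun y : EuclideanSpace ℝ (Fin N) => ‖y‖) x :=
      contDiffAt_norm ℝ hx0
    have hg2 : ContDiffAt ℝ 2 (fun t : ℝ => C * ((t - ε) ^ α - K)) ‖x‖ := by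
      have h1 : ContDiffAt ℝ 2 (fun t : ℝ => (t - ε) ^ α) ‖x‖ := by
        have h0 : ContDiffAt ℝ 2 (fun u : ℝ => u ^ α) (‖x‖ - ε) :=
          Real.contDiffAt_rpow_const_of_ne hs.ne'
        have hsub : ContDiffAt ℝ 2 (fun t : ℝ => t - ε) ‖x‖ :=
          contDiffAt_id.sub contDiffAt_const
        simpa [Function.comp_def] using h0.comp ‖x‖ hsub
      exact contDiffAt_const.mul (h1.sub contDiffAt_const)
    have := hg2.comp x hnorm
    simpa [Function.comp_def] using this
  · -- supersolution inequality
    intro x hx1 hx2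
    have hr : (0:ℝ) < ‖x‖ := lt_trans hε hx1
    have hx0 : x ≠ 0 := by intro h; rw [h] at hx1; simp at hx1; linarith
    set r : ℝ := ‖x‖ with hrdef
    have hs : (0:ℝ) < r - ε := by simp only [hrdef]; linarith
    set s : ℝ := r - ε with hsdef
    set φ' : ℝ := (α - 1) * s ^ (α - 2) * r⁻¹ + s ^ (α - 1) * (-(r ^ 2)⁻¹) with hφ'def
    -- second partial derivatives
    have hfd : ∀ i : Fin N,
        fderiv ℝ (fun y => fderiv ℝ U y (EuclideanSpace.single i 1)) x (EuclideanSpace.single i 1)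
          = C * α * (s ^ (α - 1) * r⁻¹ + x i * (φ' * (r⁻¹ * x i))) := by
      intro i
      have hev : (fun y => fderiv ℝ U y (EuclideanSpace.single i 1)) =ᶠ[nhds x]
          (fun y => (C * α) * (((‖y‖ - ε) ^ (α - 1) * ‖y‖⁻¹) * y i)) := by
        filter_upwards [hopen.mem_nhds hx1] with y hy
        rw [(hU y hy).fderiv]
        simp [EuclideanSpace.inner_single_right, real_inner_comm]
        ring
      rw [hev.fderiv_eq]
      have hφ : HasDerivAt (fun t : ℝ => (t - ε) ^ (α - 1) * t⁻¹) φ' r := by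
        have h1 : HasDerivAt (fun t : ℝ => (t - ε) ^ (α - 1)) ((α - 1) * s ^ (α - 2)) r := by
          have := (Real.hasDerivAt_rpow_const (x := r - ε) (p := α - 1) (Or.inl hs.ne')).comp r
            ((hasDerivAt_id r).sub_const ε)
          have e2 : α - 1 - 1 = α - 2 := by ring
          simpa [Function.comp_def, e2] using this
        have h2 : HasDerivAt (fun t : ℝ => t⁻¹) (-(r ^ 2)⁻¹) r := hasDerivAt_inv hr.ne'
        simpa [hφ'def, hsdef, Pi.mul_def] using h1.mul h2
      have hφx : HasFDerivAt (fun y : EuclideanSpace ℝ (Fin N) => (‖y‖ - ε) ^ (α - 1) * ‖y‖⁻¹)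
          (φ' • (r⁻¹ • (innerSL ℝ x : EuclideanSpace ℝ (Fin N) →L[ℝ] ℝ))) x :=
        hφ.comp_hasFDerivAt (h₂ := fun t : ℝ => (t - ε) ^ (α - 1) * t⁻¹) x (hasFDerivAt_norm' hx0)
      have hproj : HasFDerivAt (fun y : EuclideanSpace ℝ (Fin N) => y i)
          (EuclideanSpace.proj (𝕜 := ℝ) i) x := (EuclideanSpace.proj (𝕜 := ℝ) i).hasFDerivAt
      have hF := ((hφx.mul hproj).const_mul (C * α)).fderiv
      erw [hF]
      simp [EuclideanSpace.inner_single_right, real_inner_comm, EuclideanSpace.proj,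
        EuclideanSpace.single_apply, hsdef]
      ring
    -- the Laplacian
    have hlap : lap U x = C * α * ((α - 1) * s ^ (α - 2) + (N - 1) * (s ^ (α - 1) * r⁻¹)) := by
      rw [lap]
      simp only [hfd]
      have hsum : ∑ i : Fin N, x i ^ 2 = r ^ 2 := by
        rw [hrdef, ← real_inner_self_eq_norm_sq]
        simp only [PiLp.inner_apply, RCLike.inner_apply, sq, conj_trivial]
      have : ∑ i : Fin N, C * α * (s ^ (α - 1) * r⁻¹ + x i * (φ' * (r⁻¹ * x i)))
          = ∑ i : Fin N, (C * α * (s ^ (α - 1) * r⁻¹) + (C * α * φ' * r⁻¹) * x i ^ 2) := by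
        apply Finset.sum_congr rfl; intro i _; ring
      rw [this, Finset.sum_add_distrib, Finset.sum_const, ← Finset.mul_sum, hsum]
      simp only [hφ'def, Finset.card_univ, Fintype.card_fin, nsmul_eq_mul]
      field_simp
      ring
    -- the gradient
    have hgrad : gradient U x = (C * (α * s ^ (α - 1)) * r⁻¹) • x := by
      apply HasGradientAt.gradient
      rw [hasGradientAt_iff_hasFDerivAt]
      have := hU x hx1
      rw [← hrdef, ← hsdef] at this
      refine this.congr_fderiv ?_
      ext y
      simp [InnerProductSpace.toDual_apply_apply, inner_smul_left, real_inner_comm]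
      ring
    rw [hlap, hgrad]
    -- final algebra
    have hCα : C * α = -(B ^ (α - 1)) := by
      have ht : B ^ (α - 1) = B ^ α / B := by rw [Real.rpow_sub hB, Real.rpow_one]
      rw [hCdef, ht]
      generalize B ^ α = t
      rw [hα, hBdef]
      field_simp
      ring
    have hα1 : α - 1 = -B⁻¹ := by
      rw [hα, hBdef]
      field_simp; norm_num
    have hCαα : C * α * (α - 1) = B ^ (α - 2) := by
      have h2 : B ^ (α - 2) = B ^ (α - 1) * B⁻¹ := by
        have e : α - 2 = (α - 1) + (-1) := by ring
        rw [e, Real.rpow_add hB, Real.rpow_neg_one]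
      rw [h2, hCα, hα1]
      ring
    have hexp : (α - 1) * q = α - 2 := by
      rw [hα]; field_simp; ring
    have hnorm : ‖(C * (α * s ^ (α - 1)) * r⁻¹) • x‖ = B ^ (α - 1) * s ^ (α - 1) := by
      rw [norm_smul, ← hrdef, Real.norm_eq_abs]
      have hneg : C * (α * s ^ (α - 1)) * r⁻¹ = -(B ^ (α - 1) * s ^ (α - 1) * r⁻¹) := by
        have e : C * (α * s ^ (α - 1)) = (C * α) * s ^ (α - 1) := by ring
        rw [e, hCα]; ring
      rw [hneg, abs_neg, abs_of_pos (by positivity)]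
      field_simp
    rw [hnorm]
    have hpow : (B ^ (α - 1) * s ^ (α - 1)) ^ q = B ^ (α - 2) * s ^ (α - 2) := by
      rw [Real.mul_rpow (by positivity) (by positivity), ← Real.rpow_mul hB.le,
        ← Real.rpow_mul hs.le, hexp]
    rw [hpow]
    have key : -(C * α * ((α - 1) * s ^ (α - 2) + (↑N - 1) * (s ^ (α - 1) * r⁻¹)))
        + B ^ (α - 2) * s ^ (α - 2)
        = B ^ (α - 1) * (↑N - 1) * (s ^ (α - 1) * r⁻¹) := by
      have e1 : C * α * ((α - 1) * s ^ (α - 2) + (↑N - 1) * (s ^ (α - 1) * r⁻¹))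
          = (C * α * (α - 1)) * s ^ (α - 2) + (C * α) * ((↑N - 1) * (s ^ (α - 1) * r⁻¹)) := by ring
      rw [e1, hCαα, hCα]; ring
    rw [key]
    have hN1 : (0:ℝ) ≤ (N:ℝ) - 1 := by
      have : (1:ℝ) ≤ N := by exact_mod_cast le_trans (by norm_num) hN
      linarith
    positivity
end

section
/- Let N ≥ 2 and 1 < q < 2. Let ω ∈ ℝ^N, 0 < τ < r′, B ∈ ℝ, and let A > 0 satisfy 1/(q−1) − 1 + N + (N−1)·r′/τ ≤ ( (2−q)·A/(q−1) )^{q−1}. Define v on the annulus A(ω) = {y ∈ ℝ^N : τ < ‖y − ω‖ < r′} by v(y) = A · (r′ − ‖y − ω‖)^{(q−2)/(q−1)} − B. Then v is twice continuously differentiable on A(ω) and −Δv(y) + ‖∇v(y)‖^q ≥ 0 for every y ∈ A(ω) (the local barrier used for tangential boundary estimates). -/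
open Metric Set

section aux
open Real

variable {E : Type*} [NormedAddCommGroup E] [InnerProductSpace ℝ E]

lemma aux_hasFDerivAt_norm {x : E} (hx : x ≠ 0) :
    HasFDerivAt (fun y : E => ‖y‖) (‖x‖⁻¹ • innerSL ℝ x) x := by
  have h2 : HasFDerivAt (fun y : E => ‖y‖ ^ 2) ((2:ℕ) • innerSL ℝ x) x :=
    (hasStrictFDerivAt_norm_sq x).hasFDerivAt
  have hsq : (‖x‖ ^ 2 : ℝ) ≠ 0 := pow_ne_zero 2 (norm_ne_zero_iff.2 hx)
  have h3 := (Real.hasDerivAt_sqrt hsq).comp_hasFDerivAt x h2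
  have heq : ((fun x => √x) ∘ fun y : E => ‖y‖ ^ 2) = fun y : E => ‖y‖ := by
    funext y; exact Real.sqrt_sq (norm_nonneg y)
  rw [show ((fun x => √x) ∘ fun y : E => ‖y‖ ^ 2) = fun y : E => ‖y‖ from heq] at h3
  refine h3.congr_fderiv (Eq.symm ?_)
  rw [Real.sqrt_sq (norm_nonneg x)]
  ext y
  have hx' : ‖x‖ ≠ 0 := norm_ne_zero_iff.2 hx
  simp [smul_smul]
  field_simp

lemma radial_hasFDerivAt {φ : ℝ → ℝ} {φ' : ℝ} {ω y : E} (hx : y - ω ≠ 0)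
    (hφ : HasDerivAt φ φ' ‖y - ω‖) :
    HasFDerivAt (fun z : E => φ ‖z - ω‖) ((φ' * ‖y - ω‖⁻¹) • innerSL ℝ (y - ω)) y := by
  have hn : HasFDerivAt (fun z : E => ‖z - ω‖) (‖y - ω‖⁻¹ • innerSL ℝ (y - ω)) y := by
    have := (aux_hasFDerivAt_norm hx).comp y ((hasFDerivAt_id y).sub_const ω)
    exact this.congr_fderiv (by simp)
  have h := hφ.comp_hasFDerivAt y hn
  refine h.congr_fderiv (Eq.symm ?_)
  ext z
  simp [smul_smul]

end aux

/-- The local barrier `v(y) = A (r′ − ‖y−ω‖)^{(q−2)/(q−1)} − B` is a `C²` supersolution of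
`−Δv + |∇v|^q = 0` on the annulus `{τ < ‖y−ω‖ < r′}`, provided
`1/(q−1) − 1 + N + (N−1) r′/τ ≤ ((2−q)A/(q−1))^{q−1}`. -/
theorem local_barrier_supersolution
    (N : ℕ) (hN : 2 ≤ N) (q : ℝ) (hq1 : 1 < q) (hq2 : q < 2)
    (ω : EuclideanSpace ℝ (Fin N)) (τ r' B : ℝ) (hτ : 0 < τ) (hτr : τ < r')
    (A : ℝ) (hA : 0 < A)
    (hA2 : 1 / (q - 1) - 1 + N + (N - 1) * r' / τ ≤ ((2 - q) * A / (q - 1)) ^ (q - 1)) :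
    ContDiffOn ℝ 2
      (fun y : EuclideanSpace ℝ (Fin N) => A * (r' - ‖y - ω‖) ^ ((q - 2) / (q - 1)) - B)
      {y : EuclideanSpace ℝ (Fin N) | τ < ‖y - ω‖ ∧ ‖y - ω‖ < r'} ∧
    ∀ y : EuclideanSpace ℝ (Fin N), τ < ‖y - ω‖ → ‖y - ω‖ < r' →
      0 ≤ -lap (fun y : EuclideanSpace ℝ (Fin N) =>
              A * (r' - ‖y - ω‖) ^ ((q - 2) / (q - 1)) - B) y
        + ‖gradient (fun y : EuclideanSpace ℝ (Fin N) =>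
              A * (r' - ‖y - ω‖) ^ ((q - 2) / (q - 1)) - B) y‖ ^ q := by
  set α : ℝ := (q - 2) / (q - 1) with hα
  set C : ℝ := (2 - q) * A / (q - 1) with hC
  set v : EuclideanSpace ℝ (Fin N) → ℝ := fun y => A * (r' - ‖y - ω‖) ^ α - B with hv
  have hq1' : (0:ℝ) < q - 1 := by linarith
  have h2q : (0:ℝ) < 2 - q := by linarith
  have hCpos : 0 < C := by positivity
  set S : Set (EuclideanSpace ℝ (Fin N)) := {y | τ < ‖y - ω‖ ∧ ‖y - ω‖ < r'} with hSdef
  have hSopen : IsOpen S := by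
    have hcont : Continuous fun y : EuclideanSpace ℝ (Fin N) => ‖y - ω‖ :=
      (continuous_id.sub continuous_const).norm
    exact isOpen_Ioo.preimage hcont
  have hfacts : ∀ y : EuclideanSpace ℝ (Fin N), τ < ‖y - ω‖ → ‖y - ω‖ < r' →
      y - ω ≠ 0 ∧ 0 < ‖y - ω‖ ∧ 0 < r' - ‖y - ω‖ := by
    intro y h1 h2
    have h0 : 0 < ‖y - ω‖ := lt_trans hτ h1
    exact ⟨fun h => by simp [h] at h0, h0, by linarith⟩
  have hd : ∀ y : EuclideanSpace ℝ (Fin N), τ < ‖y - ω‖ → ‖y - ω‖ < r' →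
      HasFDerivAt v ((C * (r' - ‖y - ω‖) ^ (α - 1) * ‖y - ω‖⁻¹) • innerSL ℝ (y - ω)) y := by
    intro y h1 h2
    obtain ⟨hx, hr0, hX⟩ := hfacts y h1 h2
    have hφ : HasDerivAt (fun t : ℝ => A * (r' - t) ^ α - B)
        (A * (-1 * α * (r' - ‖y - ω‖) ^ (α - 1))) ‖y - ω‖ := by
      have hbase : HasDerivAt (fun t : ℝ => r' - t) (-1) ‖y - ω‖ :=
        (hasDerivAt_id _).const_sub r'
      exact ((hbase.rpow_const (Or.inl hX.ne')).const_mul A).sub_const B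
    have := radial_hasFDerivAt hx hφ
    refine this.congr_fderiv (congrArg (· • innerSL ℝ (y - ω)) ?_)
    rw [hC, hα]
    field_simp
    ring
  -- C² smoothness
  have hc2 : ContDiffOn ℝ 2 v S := by
    intro y hy
    obtain ⟨hx, hr0, hX⟩ := hfacts y hy.1 hy.2
    have h1 : ContDiffAt ℝ 2 (fun z : EuclideanSpace ℝ (Fin N) => ‖z - ω‖) y :=
      ContDiffAt.norm ℝ (contDiffAt_id.sub contDiffAt_const) hx
    have h3 : ContDiffAt ℝ 2 (fun z : EuclideanSpace ℝ (Fin N) => (r' - ‖z - ω‖) ^ α) y :=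
      (contDiffAt_const.sub h1).rpow_const_of_ne hX.ne'
    exact ((contDiffAt_const.mul h3).sub contDiffAt_const).contDiffWithinAt
  refine ⟨hc2, ?_⟩
  intro y h1 h2
  obtain ⟨hx, hr0, hX0⟩ := hfacts y h1 h2
  set R : ℝ := ‖y - ω‖ with hRdef
  set X : ℝ := r' - R with hXdef
  have hX : 0 < X := hX0
  -- gradient norm
  have hgrad : ‖gradient v y‖ = C * X ^ (α - 1) := by
    rw [gradient, (hd y h1 h2).fderiv, LinearIsometryEquiv.norm_map, norm_smul,
      innerSL_apply_norm]
    rw [Real.norm_eq_abs, abs_of_pos (by positivity)]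
    field_simp
    rfl
  -- derivative of the radial coefficient
  set ψ' : ℝ := (C * (-1 * (α - 1) * X ^ (α - 1 - 1))) * R⁻¹ + (C * X ^ (α - 1)) * (-(R ^ 2)⁻¹)
    with hψ'def
  have hψ : HasDerivAt (fun t : ℝ => C * (r' - t) ^ (α - 1) * t⁻¹) ψ' R := by
    have hbase : HasDerivAt (fun t : ℝ => r' - t) (-1) R := (hasDerivAt_id _).const_sub r'
    exact ((hbase.rpow_const (Or.inl hX.ne')).const_mul C).mul (hasDerivAt_inv hr0.ne')
  have hc' : HasFDerivAt
      (fun z : EuclideanSpace ℝ (Fin N) => C * (r' - ‖z - ω‖) ^ (α - 1) * ‖z - ω‖⁻¹)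
      ((ψ' * R⁻¹) • innerSL ℝ (y - ω)) y := radial_hasFDerivAt hx hψ
  have hcoord : ∀ i : Fin N, HasFDerivAt (fun z : EuclideanSpace ℝ (Fin N) => (z - ω) i)
      (EuclideanSpace.proj i : EuclideanSpace ℝ (Fin N) →L[ℝ] ℝ) y := by
    intro i
    have := (EuclideanSpace.proj i : EuclideanSpace ℝ (Fin N) →L[ℝ] ℝ).hasFDerivAt.comp y
      ((hasFDerivAt_id y).sub_const ω)
    exact this.congr_fderiv (by simp)
  have hmul : ∀ i : Fin N, HasFDerivAt
      (fun z : EuclideanSpace ℝ (Fin N) =>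
        (C * (r' - ‖z - ω‖) ^ (α - 1) * ‖z - ω‖⁻¹) * ((z - ω) i))
      ((C * X ^ (α - 1) * R⁻¹) • (EuclideanSpace.proj i : EuclideanSpace ℝ (Fin N) →L[ℝ] ℝ)
        + ((y - ω) i) • ((ψ' * R⁻¹) • innerSL ℝ (y - ω))) y := by
    intro i
    exact hc'.mul (hcoord i)
  have hEi : ∀ i : Fin N, (fun z => fderiv ℝ v z (EuclideanSpace.single i 1))
      =ᶠ[nhds y] (fun z => (C * (r' - ‖z - ω‖) ^ (α - 1) * ‖z - ω‖⁻¹) * ((z - ω) i)) := by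
    intro i
    filter_upwards [hSopen.mem_nhds (show y ∈ S from ⟨h1, h2⟩)] with z hz
    rw [(hd z hz.1 hz.2).fderiv]
    simp [EuclideanSpace.inner_single_right, real_inner_comm]
  have hterm : ∀ i : Fin N, fderiv ℝ (fun z => fderiv ℝ v z (EuclideanSpace.single i 1)) y
      (EuclideanSpace.single i 1)
      = (C * X ^ (α - 1) * R⁻¹) + (ψ' * R⁻¹) * ((y - ω) i) ^ 2 := by
    intro i
    rw [(hEi i).fderiv_eq, (hmul i).fderiv]
    simp [EuclideanSpace.inner_single_right, EuclideanSpace.single_apply]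
    ring
  have hsum : ∑ i : Fin N, ((y - ω) i) ^ 2 = R ^ 2 := by
    rw [hRdef, EuclideanSpace.norm_eq, Real.sq_sqrt (by positivity)]
    simp [Real.norm_eq_abs, sq_abs]
  have hlap : lap v y = N * (C * X ^ (α - 1) * R⁻¹) + ψ' * R := by
    unfold lap
    rw [Finset.sum_congr rfl (fun i _ => hterm i)]
    rw [Finset.sum_add_distrib, Finset.sum_const, ← Finset.mul_sum, hsum]
    simp only [Finset.card_univ, Fintype.card_fin, nsmul_eq_mul]
    field_simp
  rw [hlap, hgrad]
  -- a purely scalar computation now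
  have hP : (0:ℝ) < X ^ (α - 2) := Real.rpow_pos_of_pos hX _
  have e1 : X ^ (α - 1 - 1) = X ^ (α - 2) := by congr 1; ring
  have e2 : X ^ (α - 1) = X ^ (α - 2) * X := by
    rw [← Real.rpow_add_one hX.ne' (α - 2)]
    congr 1; ring
  have hexp : (α - 1) * q = α - 2 := by
    rw [hα]; field_simp; ring
  have e3 : (C * X ^ (α - 1)) ^ q = (C ^ (q - 1) * C) * X ^ (α - 2) := by
    rw [Real.mul_rpow hCpos.le (Real.rpow_pos_of_pos hX _).le,
      ← Real.rpow_mul hX.le, hexp]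
    nth_rewrite 1 [show q = (q - 1) + 1 by ring]
    rw [Real.rpow_add hCpos, Real.rpow_one]
  rw [e3]
  have h1α : 1 - α = 1 / (q - 1) := by rw [hα]; field_simp; norm_num
  have hmain : (N : ℝ) * (C * X ^ (α - 1) * R⁻¹) + ψ' * R
      = (C * X ^ (α - 2)) * ((N - 1) * (X / R) + (1 - α)) := by
    rw [hψ'def, e1, e2]
    field_simp
    ring
  have hdiv : X / R ≤ r' / τ := div_le_div₀ (by linarith) (by linarith) hτ h1.le
  have hN' : (2:ℝ) ≤ (N:ℝ) := by exact_mod_cast hN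
  have key : ((N:ℝ) - 1) * (X / R) + (1 - α) ≤ C ^ (q - 1) := by
    rw [h1α]
    have h5 : ((N:ℝ) - 1) * (X / R) ≤ ((N:ℝ) - 1) * (r' / τ) :=
      mul_le_mul_of_nonneg_left hdiv (by linarith)
    have h6 : ((N:ℝ) - 1) * r' / τ = ((N:ℝ) - 1) * (r' / τ) := mul_div_assoc _ _ _
    linarith [hA2]
  have hfin : (C * X ^ (α - 2)) * (((N:ℝ) - 1) * (X / R) + (1 - α))
      ≤ (C * X ^ (α - 2)) * C ^ (q - 1) :=
    mul_le_mul_of_nonneg_left key (by positivity)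
  have hring : (C * X ^ (α - 2)) * C ^ (q - 1) = C ^ (q - 1) * C * X ^ (α - 2) := by ring
  linarith [hfin, hmain, hring]
end

section
/- Let N ≥ 2 and 1 < q < 2. Let z₀ ∈ ℝ^N and R > 0 satisfy ‖z₀‖ = R, and set Ω = B_R(z₀), so that 0 ∈ ∂Ω. There exist r₀ ∈ (0, R), δ > 0 and c > 0, depending only on N, q and R, with the following property: for every Q ∈ (∂Ω \ {0}) ∩ B_{2r₀/3}, every 0 < r ≤ ‖Q‖/4, every u that is positive and twice continuously differentiable on Ω with Δu(x) = ‖∇u(x)‖^q on Ω, continuous on Ω ∪ ((∂Ω \ {0}) ∩ B_{2r₀}) and vanishing on (∂Ω \ {0}) ∩ B_{2r₀}, every P ∈ ∂Ω ∩ B_r(Q), every 0 < s < r, and every x ∈ B_s(P) ∩ Ω: u(x) ≤ c · (‖x − P‖/s)^δ · sup{ u(z) : z ∈ B_s(P) ∩ Ω } (Hölder decay at the boundary). -/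
open Metric Set

/- ### Auxiliary machinery -/

local notation "⟪" x ", " y "⟫" => @inner ℝ _ _ x y

open Filter in
theorem HBD.deriv2_nonpos_1d {g g' : ℝ → ℝ} {L : ℝ}
    (hg : ∀ᶠ τ in nhds (0:ℝ), HasDerivAt g (g' τ) τ)
    (h2 : HasDerivAt g' L 0) (hmax : IsLocalMax g 0) : L ≤ 0 := by
  by_contra hL
  push_neg at hL
  have hg0 : g' 0 = 0 := by
    have h1 : deriv g 0 = g' 0 := (hg.self_of_nhds).deriv
    rw [← h1, hmax.deriv_eq_zero]
  have hslope : Filter.Tendsto (slope g' 0) (nhdsWithin 0 {(0:ℝ)}ᶜ) (nhds L) :=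
    hasDerivAt_iff_tendsto_slope.mp h2
  have hpos : ∀ᶠ τ in nhdsWithin 0 {(0:ℝ)}ᶜ, 0 < slope g' 0 τ :=
    hslope.eventually (eventually_gt_nhds hL)
  rw [eventually_nhdsWithin_iff, Metric.eventually_nhds_iff] at hpos
  obtain ⟨ε₁, hε₁, h₁⟩ := hpos
  rw [Metric.eventually_nhds_iff] at hg
  obtain ⟨ε₂, hε₂, h₂⟩ := hg
  set ε := min ε₁ ε₂ with hε
  have hεpos : 0 < ε := lt_min hε₁ hε₂
  have hg'pos : ∀ τ ∈ Ioo (0:ℝ) ε, 0 < g' τ := by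
    intro τ hτ
    have hτ0 : τ ≠ 0 := ne_of_gt hτ.1
    have := h₁ (y := τ) (by
      rw [Real.dist_eq, sub_zero, abs_of_pos hτ.1]
      exact lt_of_lt_of_le hτ.2 (min_le_left _ _)) hτ0
    have hs : slope g' 0 τ = g' τ / τ := by simp [slope_def_field, hg0]
    rw [hs] at this
    have := mul_pos this hτ.1
    rwa [div_mul_cancel₀] at this
    exact hτ0
  have hmono : StrictMonoOn g (Icc 0 (ε/2)) := by
    apply strictMonoOn_of_deriv_pos (convex_Icc _ _)
    · intro τ hτ
      have : |τ| < ε₂ := by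
        rw [abs_of_nonneg hτ.1]
        calc τ ≤ ε/2 := hτ.2
        _ < ε := by linarith
        _ ≤ ε₂ := min_le_right _ _
      exact ((h₂ (by rwa [Real.dist_eq, sub_zero])).continuousAt).continuousWithinAt
    · intro τ hτ
      rw [interior_Icc] at hτ
      have hd : HasDerivAt g (g' τ) τ := h₂ (by
        rw [Real.dist_eq, sub_zero, abs_of_pos hτ.1]
        calc τ < ε/2 := hτ.2
        _ < ε := by linarith
        _ ≤ ε₂ := min_le_right _ _)
      rw [hd.deriv]
      exact hg'pos τ ⟨hτ.1, by linarith [hτ.2]⟩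
  have hmax' : ∀ᶠ y in nhds (0:ℝ), g y ≤ g 0 := hmax
  rw [Metric.eventually_nhds_iff] at hmax'
  obtain ⟨ε₃, hε₃, h₃⟩ := hmax'
  set τ := min (ε/2) (ε₃/2) with hτdef
  have hτpos : 0 < τ := lt_min (by linarith) (by linarith)
  have h4 : g 0 < g τ := hmono (by constructor <;> [rfl; linarith])
    ⟨le_of_lt hτpos, min_le_left _ _⟩ hτpos
  have h5 : g τ ≤ g 0 := h₃ (by
    rw [Real.dist_eq, sub_zero, abs_of_pos hτpos]
    calc τ ≤ ε₃/2 := min_le_right _ _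
    _ < ε₃ := by linarith)
  linarith

open Filter in
theorem HBD.lap_nonpos_of_isLocalMax {N : ℕ} {v : EuclideanSpace ℝ (Fin N) → ℝ}
    {x₀ : EuclideanSpace ℝ (Fin N)}
    (hd : ∀ᶠ y in nhds x₀, DifferentiableAt ℝ v y)
    (hd2 : ∀ i : Fin N,
      DifferentiableAt ℝ (fun y => fderiv ℝ v y (EuclideanSpace.single i 1)) x₀)
    (hmax : IsLocalMax v x₀) : lap v x₀ ≤ 0 := by
  apply Finset.sum_nonpos
  intro i _
  set e : EuclideanSpace ℝ (Fin N) := EuclideanSpace.single i 1 with he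
  set c : ℝ → EuclideanSpace ℝ (Fin N) := fun τ => x₀ + τ • e with hc
  have hc0 : c 0 = x₀ := by simp [hc]
  have hcd : ∀ τ : ℝ, HasDerivAt c e τ := by
    intro τ
    have h := ((hasDerivAt_id τ).smul_const e).const_add x₀
    rw [one_smul] at h
    exact h
  have hcont : Continuous c := by continuity
  have hctend : Filter.Tendsto c (nhds 0) (nhds x₀) := by
    rw [← hc0]; exact hcont.tendsto 0
  set g : ℝ → ℝ := fun τ => v (c τ) with hgdef
  set g' : ℝ → ℝ := fun τ => fderiv ℝ v (c τ) e with hg'def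
  have hg : ∀ᶠ τ in nhds (0:ℝ), HasDerivAt g (g' τ) τ := by
    filter_upwards [hctend.eventually hd] with τ hτ
    exact hτ.hasFDerivAt.comp_hasDerivAt τ (hcd τ)
  have h2 : HasDerivAt g' (fderiv ℝ (fun y => fderiv ℝ v y e) x₀ e) 0 := by
    have hd2' : HasFDerivAt (fun y => fderiv ℝ v y e)
        (fderiv ℝ (fun y => fderiv ℝ v y e) x₀) (c 0) := by
      rw [hc0]; exact (hd2 i).hasFDerivAt
    exact hd2'.comp_hasDerivAt 0 (hcd 0)
  have hgmax : IsLocalMax g 0 := by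
    have : ∀ᶠ τ in nhds (0:ℝ), v (c τ) ≤ v x₀ := hctend.eventually hmax
    filter_upwards [this] with τ hτ
    simpa [hgdef, hc0] using hτ
  exact HBD.deriv2_nonpos_1d hg h2 hgmax

section
variable {E : Type*} [NormedAddCommGroup E] [InnerProductSpace ℝ E]

theorem HBD.base1 (a b : E) (y : E) :
    HasFDerivAt (fun y : E => ⟪y - a, b⟫) (innerSL ℝ b) y := by
  have h := ((hasFDerivAt_id (𝕜 := ℝ) y).sub_const a).inner ℝ (hasFDerivAt_const b y)
  refine h.congr_fderiv ?_
  ext w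
  simp [fderivInnerCLM, real_inner_comm]

theorem HBD.base2 (a : E) (y : E) :
    HasFDerivAt (fun y : E => ‖y - a‖^2) ((2:ℝ) • innerSL ℝ (y - a)) y := by
  have h := ((hasFDerivAt_id (𝕜 := ℝ) y).sub_const a).norm_sq
  refine h.congr_fderiv ?_
  ext w
  simp

end

namespace HBD
variable {N : ℕ}

theorem sum_inner_single_sq (v : EuclideanSpace ℝ (Fin N)) :
    ∑ i : Fin N, ⟪v, EuclideanSpace.single i (1:ℝ)⟫^2 = ‖v‖^2 := by
  have h1 : ∀ i : Fin N, ⟪v, EuclideanSpace.single i (1:ℝ)⟫ = v i := by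
    intro i
    rw [EuclideanSpace.inner_single_right]
    simp
  simp_rw [h1]
  rw [EuclideanSpace.norm_eq]
  rw [Real.sq_sqrt (by positivity)]
  congr 1
  funext i
  rw [Real.norm_eq_abs, sq_abs]

theorem inner_single_single (i : Fin N) :
    ⟪(EuclideanSpace.single i (1:ℝ) : EuclideanSpace ℝ (Fin N)),
      EuclideanSpace.single i (1:ℝ)⟫ = 1 := by
  rw [EuclideanSpace.inner_single_right]
  simp [EuclideanSpace.single_apply]

noncomputable def pol (P z₀ ν : EuclideanSpace ℝ (Fin N)) (c₁ c₂ c₃ c₄ K0 : ℝ) :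
    EuclideanSpace ℝ (Fin N) → ℝ := fun y =>
  c₁ * ⟪y - P, ν⟫ + c₂ * ‖y - P‖^2 + c₃ * (⟪y - P, ν⟫ * ⟪y - P, ν⟫) + c₄ * ‖y - z₀‖^2 - K0

noncomputable def polD (P z₀ ν : EuclideanSpace ℝ (Fin N)) (c₁ c₂ c₃ c₄ : ℝ) :
    EuclideanSpace ℝ (Fin N) → (EuclideanSpace ℝ (Fin N) →L[ℝ] ℝ) := fun y =>
  c₁ • innerSL ℝ ν + c₂ • ((2:ℝ) • innerSL ℝ (y - P)) +
    (c₃ * (2 * ⟪y - P, ν⟫)) • innerSL ℝ ν + c₄ • ((2:ℝ) • innerSL ℝ (y - z₀))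

variable (P z₀ ν : EuclideanSpace ℝ (Fin N)) (c₁ c₂ c₃ c₄ K0 : ℝ)

theorem pol_hasFDerivAt (y : EuclideanSpace ℝ (Fin N)) :
    HasFDerivAt (pol P z₀ ν c₁ c₂ c₃ c₄ K0) (polD P z₀ ν c₁ c₂ c₃ c₄ y) y := by
  have h :=
    (((((base1 P ν y).const_mul c₁).add ((base2 P y).const_mul c₂)).add
      (((base1 P ν y).mul (base1 P ν y)).const_mul c₃)).add
      ((base2 z₀ y).const_mul c₄)).sub_const K0
  refine h.congr_fderiv ?_
  ext w
  simp only [ContinuousLinearMap.add_apply, ContinuousLinearMap.smul_apply, smul_eq_mul,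
    innerSL_apply_apply, ContinuousLinearMap.coe_smul', Pi.smul_apply, polD]
  ring_nf

theorem polD_apply_hasFDerivAt (e x : EuclideanSpace ℝ (Fin N)) :
    HasFDerivAt (fun y => polD P z₀ ν c₁ c₂ c₃ c₄ y e)
      ((c₂ * 2) • innerSL ℝ e + (c₃ * 2 * ⟪ν, e⟫) • innerSL ℝ ν +
        (c₄ * 2) • innerSL ℝ e) x := by
  have hfun : (fun y => polD P z₀ ν c₁ c₂ c₃ c₄ y e) = fun y =>
      (c₂ * 2) * ⟪y - P, e⟫ + (c₃ * 2 * ⟪ν, e⟫) * ⟪y - P, ν⟫ +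
        (c₄ * 2) * ⟪y - z₀, e⟫ + c₁ * ⟪ν, e⟫ := by
    funext y
    simp only [polD, ContinuousLinearMap.add_apply, ContinuousLinearMap.smul_apply, smul_eq_mul,
      innerSL_apply_apply, ContinuousLinearMap.coe_smul', Pi.smul_apply]
    ring
  rw [hfun]
  have h := ((((base1 P e x).const_mul (c₂*2)).add
      ((base1 P ν x).const_mul (c₃ * 2 * ⟪ν, e⟫))).add
      ((base1 z₀ e x).const_mul (c₄*2))).add_const (c₁ * ⟪ν, e⟫)
  refine h.congr_fderiv ?_
  ext w
  simp only [ContinuousLinearMap.add_apply, ContinuousLinearMap.smul_apply, smul_eq_mul,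
    innerSL_apply_apply, ContinuousLinearMap.coe_smul', Pi.smul_apply]

open Filter in
theorem lap_add_pol {u : EuclideanSpace ℝ (Fin N) → ℝ} {U : Set (EuclideanSpace ℝ (Fin N))}
    (hU : IsOpen U) {x₀ : EuclideanSpace ℝ (Fin N)} (hx₀ : x₀ ∈ U)
    (hu : ContDiffOn ℝ 2 u U) (hν : ‖ν‖ = 1) :
    lap (fun y => u y + pol P z₀ ν c₁ c₂ c₃ c₄ K0 y) x₀
      = lap u x₀ + 2 * c₂ * N + 2 * c₃ + 2 * c₄ * N := by
  have hud : ∀ y ∈ U, DifferentiableAt ℝ u y := fun y hy =>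
    (hu.differentiableOn (by norm_num)).differentiableAt (hU.mem_nhds hy)
  have hfd : ContDiffOn ℝ 1 (fun y => fderiv ℝ u y) U :=
    hu.fderiv_of_isOpen hU (by norm_num)
  have hfd' : ∀ e, DifferentiableAt ℝ (fun y => fderiv ℝ u y e) x₀ := fun e =>
    ((hfd.differentiableOn one_ne_zero).differentiableAt (hU.mem_nhds hx₀)).clm_apply
      (differentiableAt_const e)
  have key : ∀ i : Fin N,
      fderiv ℝ (fun y => fderiv ℝ (fun y => u y + pol P z₀ ν c₁ c₂ c₃ c₄ K0 y) y
          (EuclideanSpace.single i 1)) x₀ (EuclideanSpace.single i 1)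
        = fderiv ℝ (fun y => fderiv ℝ u y (EuclideanSpace.single i 1)) x₀
            (EuclideanSpace.single i 1)
          + (c₂ * 2 + c₃ * 2 * ⟪ν, EuclideanSpace.single i (1:ℝ)⟫^2 + c₄ * 2) := by
    intro i
    set e : EuclideanSpace ℝ (Fin N) := EuclideanSpace.single i 1 with he
    have hEv : (fun y => fderiv ℝ (fun y => u y + pol P z₀ ν c₁ c₂ c₃ c₄ K0 y) y e)
        =ᶠ[nhds x₀] (fun y => fderiv ℝ u y e + polD P z₀ ν c₁ c₂ c₃ c₄ y e) := by
      filter_upwards [hU.mem_nhds hx₀] with y hy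
      have h1 : HasFDerivAt (fun y => u y + pol P z₀ ν c₁ c₂ c₃ c₄ K0 y)
          (fderiv ℝ u y + polD P z₀ ν c₁ c₂ c₃ c₄ y) y :=
        ((hud y hy).hasFDerivAt).add (pol_hasFDerivAt P z₀ ν c₁ c₂ c₃ c₄ K0 y)
      rw [h1.fderiv, ContinuousLinearMap.add_apply]
    rw [hEv.fderiv_eq]
    have h2 : HasFDerivAt (fun y => fderiv ℝ u y e + polD P z₀ ν c₁ c₂ c₃ c₄ y e)
        ((fderiv ℝ (fun y => fderiv ℝ u y e) x₀) +
          ((c₂ * 2) • innerSL ℝ e + (c₃ * 2 * ⟪ν, e⟫) • innerSL ℝ ν +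
            (c₄ * 2) • innerSL ℝ e)) x₀ :=
      ((hfd' e).hasFDerivAt).add (polD_apply_hasFDerivAt P z₀ ν c₁ c₂ c₃ c₄ e x₀)
    rw [h2.fderiv, ContinuousLinearMap.add_apply]
    congr 1
    have hee : ⟪(e : EuclideanSpace ℝ (Fin N)), e⟫ = 1 := inner_single_single i
    simp only [ContinuousLinearMap.add_apply, ContinuousLinearMap.smul_apply, smul_eq_mul,
      innerSL_apply_apply]
    rw [hee]
    ring
  have hB : ∑ i : Fin N, (c₂ * 2 + c₃ * 2 * ⟪ν, EuclideanSpace.single i (1:ℝ)⟫^2 + c₄ * 2)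
      = 2 * c₂ * N + 2 * c₃ + 2 * c₄ * N := by
    rw [Finset.sum_add_distrib, Finset.sum_add_distrib]
    simp only [Finset.sum_const, Finset.card_univ, Fintype.card_fin, nsmul_eq_mul]
    have h3 : ∑ i : Fin N, c₃ * 2 * ⟪ν, EuclideanSpace.single i (1:ℝ)⟫^2
        = c₃ * 2 * ‖ν‖^2 := by
      rw [← Finset.mul_sum, sum_inner_single_sq]
    rw [h3, hν]
    ring
  unfold lap
  simp_rw [key]
  rw [Finset.sum_add_distrib, hB]
  ring

end HBD


namespace HBD

theorem arith_eps {e a R : ℝ} (he : 0 ≤ e) (h0 : 0 ≤ a) (haR : a ≤ R) :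
    e * a^2 - e * R^2 ≤ 0 := by
  have h2 : a*a ≤ R*R := mul_le_mul haR haR h0 (h0.trans haR)
  nlinarith [mul_le_mul_of_nonneg_left h2 he]

theorem arith_sphere {a1 n s t R ξ : ℝ} (hn : 2 ≤ n) (ht0 : 0 ≤ t) (hts : t ≤ s)
    (hsR : s < R) (hR : 0 < R) (ha1 : 0 ≤ a1) (hξ : ξ = -(t^2)/(2*R)) :
    a1*(n+1)*s*ξ + -a1*t^2 + a1*n*(ξ*ξ) ≤ 0 := by
  subst hξ
  have h1 : (n+1)*s*(-(-(t^2)/(2*R))) + t^2 - n*((-(t^2)/(2*R))*(-(t^2)/(2*R))) ≥ 0 := by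
    have hs0 : (0:ℝ) ≤ s := ht0.trans hts
    have h1 : t^2 ≤ s*R := by nlinarith [mul_le_mul hts (hts.trans hsR.le) ht0 hs0]
    have h2 : t^2*t^2 ≤ (s*R)*t^2 := mul_le_mul_of_nonneg_right h1 (sq_nonneg t)
    have h3 : n*((s*R)*t^2) ≤ 2*R*(n+1)*s*t^2 := by
      nlinarith [mul_nonneg (mul_nonneg (mul_nonneg hR.le hs0) (sq_nonneg t))
        (by linarith : (0:ℝ) ≤ n+2)]
    have key : n * (t^2 * t^2) ≤ 2*R*(n+1)*s*t^2 + 4*R^2*t^2 := by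
      have h4 : n*(t^2*t^2) ≤ n*((s*R)*t^2) :=
        mul_le_mul_of_nonneg_left h2 (by linarith)
      nlinarith [sq_nonneg R, sq_nonneg t, mul_nonneg (sq_nonneg R) (sq_nonneg t)]
    have heq : (n+1)*s*(-(-(t^2)/(2*R))) + t^2 - n*((-(t^2)/(2*R))*(-(t^2)/(2*R)))
        = (2*R*(n+1)*s*t^2 + 4*R^2*t^2 - n*(t^2*t^2)) / (4*R^2) := by
      field_simp
      ring
    rw [heq]
    apply div_nonneg (by linarith) (by positivity)
  nlinarith [mul_nonneg ha1 h1]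

theorem arith_flat {a1 n s ξ : ℝ} (hn : 2 ≤ n) (hξ0 : ξ ≤ 0) (hξs : -ξ ≤ s)
    (hs : 0 < s) (ha1 : 0 ≤ a1) :
    a1*(n+1)*s*ξ + a1*n*(ξ*ξ) ≤ 0 := by
  have h1 : (n+1)*s*(-ξ) - n*(ξ*ξ) ≥ 0 := by
    nlinarith [mul_le_mul_of_nonneg_left hξs (mul_nonneg (by linarith : (0:ℝ) ≤ n)
      (neg_nonneg.mpr hξ0)), mul_nonneg hs.le (neg_nonneg.mpr hξ0)]
  nlinarith [mul_nonneg ha1 h1]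

theorem arith_final {n s t ξ M : ℝ} (hn : 2 ≤ n) (hs : 0 < s) (hts : t ≤ s)
    (ht0 : 0 ≤ t) (hξt : -ξ ≤ t) (hM : 0 ≤ M) :
    -((M/s^2)*(n+1)*s*ξ + -(M/s^2)*t^2 + (M/s^2)*n*(ξ*ξ)) ≤ (n+2)*(t/s)*M := by
  have h1 : (n+1)*s*(-ξ) + t^2 - n*(ξ*ξ) ≤ (n+2)*s*t := by
    nlinarith [mul_le_mul_of_nonneg_left hξt (mul_nonneg (by linarith : (0:ℝ) ≤ n+1) hs.le),
      mul_le_mul_of_nonneg_right hts ht0,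
      mul_nonneg (by linarith : (0:ℝ) ≤ n) (mul_self_nonneg ξ)]
  have h2 : (0:ℝ) ≤ M/s^2 := by positivity
  have h3 : (M/s^2) * ((n+1)*s*(-ξ) + t^2 - n*(ξ*ξ)) ≤ (M/s^2) * ((n+2)*s*t) :=
    mul_le_mul_of_nonneg_left h1 h2
  have h4 : (M/s^2) * ((n+2)*s*t) = (n+2)*(t/s)*M := by
    field_simp
  nlinarith [h3, h4]

end HBD

set_option maxHeartbeats 2000000 in
/-- Hölder decay at the boundary for positive solutions of `−Δu + |∇u|^q = 0` (`1 < q < 2`)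
in a ball tangent to the origin, vanishing on the boundary near `0`:
`u(x) ≤ c (‖x−P‖/s)^δ · sup_{B_s(P) ∩ Ω} u`. -/
theorem holder_boundary_decay
    (N : ℕ) (hN : 2 ≤ N) (q : ℝ) (hq1 : 1 < q) (hq2 : q < 2)
    (z₀ : EuclideanSpace ℝ (Fin N)) (R : ℝ) (hR : 0 < R) (hz₀ : ‖z₀‖ = R) :
    ∃ r₀ ∈ Set.Ioo (0 : ℝ) R, ∃ δ : ℝ, 0 < δ ∧ ∃ c : ℝ, 0 < c ∧
      ∀ Q ∈ (Metric.sphere z₀ R \ {0}) ∩ Metric.ball 0 (2 * r₀ / 3),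
      ∀ r : ℝ, 0 < r → r ≤ ‖Q‖ / 4 →
      ∀ u : EuclideanSpace ℝ (Fin N) → ℝ,
        (∀ x ∈ Metric.ball z₀ R, 0 < u x) →
        ContDiffOn ℝ 2 u (Metric.ball z₀ R) →
        (∀ x ∈ Metric.ball z₀ R, lap u x = ‖gradient u x‖ ^ q) →
        ContinuousOn u
          (Metric.ball z₀ R ∪ ((Metric.sphere z₀ R \ {0}) ∩ Metric.ball 0 (2 * r₀))) →
        (∀ x ∈ (Metric.sphere z₀ R \ {0}) ∩ Metric.ball 0 (2 * r₀), u x = 0) →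
        ∀ P ∈ Metric.sphere z₀ R ∩ Metric.ball Q r,
        ∀ s : ℝ, 0 < s → s < r →
        ∀ x ∈ Metric.ball P s ∩ Metric.ball z₀ R,
          u x ≤ c * (dist x P / s) ^ δ *
            sSup (u '' (Metric.ball P s ∩ Metric.ball z₀ R)) := by
  refine ⟨R/2, ⟨by linarith, by linarith⟩, 1, one_pos, (N:ℝ) + 2, by positivity, ?_⟩
  intro Q hQ r hr hrQ u hpos hu2 hlap hcont hvan P hP s hs hsr x hx
  -- basic facts
  have hQ0 : Q ≠ 0 := hQ.1.2
  have hQpos : (0:ℝ) < ‖Q‖ := norm_pos_iff.mpr hQ0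
  have hQnorm : ‖Q‖ < 2 * (R/2) / 3 := by
    have := mem_ball.mp hQ.2; rwa [dist_zero_right] at this
  have hPz : dist P z₀ = R := mem_sphere.mp hP.1
  have hPQ : dist P Q < r := mem_ball.mp hP.2
  have hsR : s < R := by linarith only [hrQ, hQnorm, hs, hsr, hr, hR, hQpos]
  have hxP : dist x P < s := mem_ball.mp hx.1
  have hxz : dist x z₀ < R := mem_ball.mp hx.2
  -- the domain and its closure
  set D : Set (EuclideanSpace ℝ (Fin N)) := Metric.ball P s ∩ Metric.ball z₀ R with hD
  have hDopen : IsOpen D := isOpen_ball.inter isOpen_ball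
  set K := closure D with hK
  have hDK : D ⊆ K := subset_closure
  have hKsub : K ⊆ Metric.closedBall P s ∩ Metric.closedBall z₀ R :=
    closure_minimal (inter_subset_inter ball_subset_closedBall ball_subset_closedBall)
      (Metric.isClosed_closedBall.inter Metric.isClosed_closedBall)
  -- norm bounds near the boundary
  have hbd : ∀ z : EuclideanSpace ℝ (Fin N), dist z P ≤ s → z ≠ 0 ∧ ‖z‖ < 2 * (R/2) := by
    intro z hz
    have h1 : dist z Q ≤ dist z P + dist P Q := dist_triangle z P Q
    have h2 : dist z Q < ‖Q‖ / 2 := by linarith only [h1, hz, hPQ, hsr, hrQ, hs]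
    have h3 : dist Q 0 = ‖Q‖ := dist_zero_right Q
    have h4 : dist Q 0 ≤ dist Q z + dist z 0 := dist_triangle Q z 0
    have h5 : dist z 0 ≤ dist z Q + dist Q 0 := dist_triangle z Q 0
    have h6 : dist Q z = dist z Q := dist_comm Q z
    have h7 : (0:ℝ) < dist z 0 := by linarith only [h3, h4, h6, h2, hQpos]
    have h8 : dist z 0 = ‖z‖ := dist_zero_right z
    refine ⟨fun h0 => by simp [h0] at h7, ?_⟩
    rw [← h8]
    linarith only [h5, h3, h2, hQnorm, hQpos]
  have hKmem : K ⊆ Metric.ball z₀ R ∪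
      ((Metric.sphere z₀ R \ {0}) ∩ Metric.ball 0 (2 * (R/2))) := by
    intro z hz
    obtain ⟨hz1, hz2⟩ := hKsub hz
    rw [mem_closedBall] at hz1 hz2
    by_cases h : dist z z₀ < R
    · exact Or.inl (mem_ball.mpr h)
    · have hzz : dist z z₀ = R := le_antisymm hz2 (not_lt.mp h)
      obtain ⟨hb1, hb2⟩ := hbd z hz1
      exact Or.inr ⟨⟨mem_sphere.mpr hzz, hb1⟩, mem_ball.mpr (by rwa [dist_zero_right])⟩
  have hcontK : ContinuousOn u K := hcont.mono hKmem
  have hKcomp : IsCompact K :=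
    (isCompact_closedBall P s).of_isClosed_subset isClosed_closure
      (fun z hz => (hKsub hz).1)
  -- the supremum
  set M := sSup (u '' D) with hM
  have hBdd : BddAbove (u '' D) :=
    ((hKcomp.image_of_continuousOn hcontK).bddAbove).mono (by rintro _ ⟨y, hy, rfl⟩; exact ⟨y, hDK hy, rfl⟩)
  have hle : ∀ y ∈ D, u y ≤ M := fun y hy => le_csSup hBdd (mem_image_of_mem u hy)
  have hM0 : 0 < M := lt_of_lt_of_le (hpos x hx.2) (hle x hx)
  have hMK : ∀ z ∈ K, u z ≤ M := by
    intro z hz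
    have hcw : ContinuousWithinAt u D z := (hcontK z hz).mono hDK
    have hne : (nhdsWithin z D).NeBot := mem_closure_iff_nhdsWithin_neBot.mp hz
    exact le_of_tendsto hcw (eventually_mem_nhdsWithin.mono (fun y hy => hle y hy))
  -- the unit normal
  set ν : EuclideanSpace ℝ (Fin N) := (R⁻¹ : ℝ) • (P - z₀) with hνdef
  have hPz' : ‖P - z₀‖ = R := by rw [← dist_eq_norm]; exact hPz
  have hν : ‖ν‖ = 1 := by
    rw [hνdef, norm_smul, Real.norm_eq_abs, abs_inv, abs_of_pos hR, hPz']
    field_simp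
  -- coefficients
  set n : ℝ := (N:ℝ) with hn
  have hn2 : (2:ℝ) ≤ n := by rw [hn]; exact_mod_cast hN
  set a1 : ℝ := M / s^2 with ha1
  have ha1pos : 0 < a1 := by positivity
  set c₁ : ℝ := a1 * (n+1) * s with hc₁
  set c₂ : ℝ := -a1 with hc₂
  set c₃ : ℝ := a1 * n with hc₃
  -- inner product facts on the closed region
  have hinner : ∀ z ∈ Metric.closedBall P s ∩ Metric.closedBall z₀ R,
      @inner ℝ _ _ (z - P) ν ≤ 0 ∧ |@inner ℝ _ _ (z - P) ν| ≤ ‖z - P‖ ∧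
      (dist z z₀ = R → @inner ℝ _ _ (z - P) ν = -(‖z - P‖^2)/(2*R)) := by
    intro z hz
    have hz2 : ‖z - z₀‖ ≤ R := by
      have := mem_closedBall.mp hz.2; rwa [dist_eq_norm] at this
    have hsplit : z - P = (z - z₀) - (P - z₀) := by abel
    have hxi : @inner ℝ _ _ (z - P) ν
        = R⁻¹ * (@inner ℝ _ _ (z - z₀) (P - z₀) - R^2) := by
      rw [hνdef, real_inner_smul_right, hsplit, inner_sub_left,
        real_inner_self_eq_norm_sq, hPz']
    have hCS : @inner ℝ _ _ (z - z₀) (P - z₀) ≤ ‖z - z₀‖ * ‖P - z₀‖ :=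
      real_inner_le_norm _ _
    have hIR : @inner ℝ _ _ (z - z₀) (P - z₀) ≤ R^2 := by
      have h1 : ‖z - z₀‖ * ‖P - z₀‖ ≤ R * R := by
        rw [hPz']
        exact mul_le_mul_of_nonneg_right hz2 (le_of_lt hR)
      nlinarith [hCS, h1]
    have hRinv : (0:ℝ) ≤ R⁻¹ := by positivity
    refine ⟨?_, ?_, ?_⟩
    · rw [hxi]
      calc R⁻¹ * (@inner ℝ _ _ (z - z₀) (P - z₀) - R^2)
          ≤ R⁻¹ * 0 := mul_le_mul_of_nonneg_left (by linarith only [hIR]) hRinv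
      _ = 0 := mul_zero _
    · calc |@inner ℝ _ _ (z - P) ν| ≤ ‖z - P‖ * ‖ν‖ := abs_real_inner_le_norm _ _
      _ = ‖z - P‖ := by rw [hν, mul_one]
    · intro hzsph
      have hz2' : ‖z - z₀‖ = R := by rw [← dist_eq_norm]; exact hzsph
      have hexp : ‖z - P‖^2 = ‖z - z₀‖^2 - 2 * @inner ℝ _ _ (z - z₀) (P - z₀)
          + ‖P - z₀‖^2 := by
        rw [hsplit]; exact norm_sub_sq_real _ _
      rw [hz2', hPz'] at hexp
      have h2I : @inner ℝ _ _ (z - z₀) (P - z₀) = R^2 - ‖z - P‖^2/2 := by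
        linarith only [hexp]
      rw [hxi, h2I]
      have hR' : R ≠ 0 := ne_of_gt hR
      field_simp
      ring
  obtain ⟨hxξ0, hxξabs, -⟩ :=
    hinner x ⟨ball_subset_closedBall hx.1, ball_subset_closedBall hx.2⟩
  have hxts : ‖x - P‖ ≤ s := by rw [← dist_eq_norm]; exact le_of_lt hxP
  have hxξt : -(@inner ℝ _ _ (x - P) ν) ≤ ‖x - P‖ := by
    have h1 := neg_abs_le (@inner ℝ _ _ (x - P) ν)
    linarith only [h1, hxξabs]
  have hxD : x ∈ D := hx
  clear_value D K M ν n a1 c₁ c₂ c₃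
  -- the key estimate, for every ε > 0
  have hKey : ∀ ε : ℝ, 0 < ε →
      u x + HBD.pol P z₀ ν c₁ c₂ c₃ ε (ε * R^2) x ≤ 0 := by
    intro ε hε
    set F : EuclideanSpace ℝ (Fin N) → ℝ :=
      fun y => u y + HBD.pol P z₀ ν c₁ c₂ c₃ ε (ε * R^2) y with hF
    have hpolc : Continuous (HBD.pol P z₀ ν c₁ c₂ c₃ ε (ε * R^2)) := by
      rw [continuous_iff_continuousAt]
      exact fun y =>
        (HBD.pol_hasFDerivAt P z₀ ν c₁ c₂ c₃ ε (ε*R^2) y).differentiableAt.continuousAt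
    have hFcont : ContinuousOn F K := hcontK.add hpolc.continuousOn
    obtain ⟨x₀, hx₀K, hx₀max⟩ := hKcomp.exists_isMaxOn ⟨x, hDK hxD⟩ hFcont
    have hFx₀ : F x₀ ≤ 0 := by
      by_cases hx₀D : x₀ ∈ D
      · -- interior maximum: impossible
        exfalso
        have hx₀D' : x₀ ∈ Metric.ball P s ∩ Metric.ball z₀ R := by
          rw [← hD]; exact hx₀D
        have hx₀ball : x₀ ∈ Metric.ball z₀ R := hx₀D'.2
        have hud : ∀ y ∈ Metric.ball z₀ R, DifferentiableAt ℝ u y := fun y hy =>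
          (hu2.differentiableOn (by norm_num)).differentiableAt (isOpen_ball.mem_nhds hy)
        have hloc : IsLocalMax F x₀ :=
          hx₀max.isLocalMax (Filter.mem_of_superset (hDopen.mem_nhds hx₀D) hDK)
        have hd : ∀ᶠ y in nhds x₀, DifferentiableAt ℝ F y := by
          filter_upwards [isOpen_ball.mem_nhds hx₀ball] with y hy
          exact (hud y hy).add
            (HBD.pol_hasFDerivAt P z₀ ν c₁ c₂ c₃ ε (ε*R^2) y).differentiableAt
        have hfd2 : ContDiffOn ℝ 1 (fun y => fderiv ℝ u y) (Metric.ball z₀ R) :=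
          hu2.fderiv_of_isOpen isOpen_ball (by norm_num)
        have hd2 : ∀ i : Fin N, DifferentiableAt ℝ
            (fun y => fderiv ℝ F y (EuclideanSpace.single i 1)) x₀ := by
          intro i
          set e : EuclideanSpace ℝ (Fin N) := EuclideanSpace.single i 1 with he
          have hEv : (fun y => fderiv ℝ F y e)
              =ᶠ[nhds x₀] (fun y => fderiv ℝ u y e + HBD.polD P z₀ ν c₁ c₂ c₃ ε y e) := by
            filter_upwards [isOpen_ball.mem_nhds hx₀ball] with y hy
            have h1 : HasFDerivAt F
                (fderiv ℝ u y + HBD.polD P z₀ ν c₁ c₂ c₃ ε y) y :=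
              ((hud y hy).hasFDerivAt).add
                (HBD.pol_hasFDerivAt P z₀ ν c₁ c₂ c₃ ε (ε*R^2) y)
            rw [h1.fderiv, ContinuousLinearMap.add_apply]
          rw [hEv.differentiableAt_iff]
          exact (((hfd2.differentiableOn one_ne_zero).differentiableAt
            (isOpen_ball.mem_nhds hx₀ball)).clm_apply (differentiableAt_const e)).add
            (HBD.polD_apply_hasFDerivAt P z₀ ν c₁ c₂ c₃ ε e x₀).differentiableAt
        have hlapF : lap F x₀ ≤ 0 := HBD.lap_nonpos_of_isLocalMax hd hd2 hloc
        have hlapF' : lap F x₀ = lap u x₀ + 2 * c₂ * n + 2 * c₃ + 2 * ε * n := by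
          rw [hF]
          rw [HBD.lap_add_pol P z₀ ν c₁ c₂ c₃ ε (ε*R^2) isOpen_ball hx₀ball hu2 hν, hn]
        have hlapu : lap u x₀ = ‖gradient u x₀‖ ^ q := hlap x₀ hx₀ball
        have hgrad : (0:ℝ) ≤ ‖gradient u x₀‖ ^ q := Real.rpow_nonneg (norm_nonneg _) q
        have hc23 : 2 * c₂ * n + 2 * c₃ = 0 := by rw [hc₂, hc₃]; ring
        have hnpos : (0:ℝ) < n := lt_of_lt_of_le two_pos hn2
        have hεn : (0:ℝ) < 2*ε*n := mul_pos (mul_pos two_pos hε) hnpos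
        linarith only [hlapF, hlapF', hlapu, hgrad, hc23, hεn]
      · -- boundary point
        obtain ⟨hz1, hz2⟩ := hKsub hx₀K
        obtain ⟨hξ0, hξabs, hξsph⟩ := hinner x₀ ⟨hz1, hz2⟩
        have ht0 : (0:ℝ) ≤ ‖x₀ - P‖ := norm_nonneg _
        have hts : ‖x₀ - P‖ ≤ s := by
          rw [← dist_eq_norm]; exact mem_closedBall.mp hz1
        have hz₀R : ‖x₀ - z₀‖ ≤ R := by
          have := mem_closedBall.mp hz2; rwa [dist_eq_norm] at this
        have hεterm : ε * ‖x₀ - z₀‖^2 - ε * R^2 ≤ 0 :=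
          HBD.arith_eps (le_of_lt hε) (norm_nonneg _) hz₀R
        have hFval : F x₀ = u x₀ + (c₁ * @inner ℝ _ _ (x₀ - P) ν + c₂ * ‖x₀ - P‖^2
            + c₃ * (@inner ℝ _ _ (x₀ - P) ν * @inner ℝ _ _ (x₀ - P) ν)
            + (ε * ‖x₀ - z₀‖^2 - ε * R^2)) := by
          rw [hF]
          simp only [HBD.pol]
          ring
        by_cases hsph : dist x₀ z₀ = R
        · -- on the sphere: u vanishes
          have hvz : u x₀ = 0 := by
            obtain ⟨hb1, hb2⟩ := hbd x₀ (mem_closedBall.mp hz1)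
            exact hvan x₀ ⟨⟨mem_sphere.mpr hsph, hb1⟩,
              mem_ball.mpr (by rwa [dist_zero_right])⟩
          have hξval : @inner ℝ _ _ (x₀ - P) ν = -(‖x₀ - P‖^2)/(2*R) := hξsph hsph
          have hmain : c₁ * @inner ℝ _ _ (x₀ - P) ν + c₂ * ‖x₀ - P‖^2
              + c₃ * (@inner ℝ _ _ (x₀ - P) ν * @inner ℝ _ _ (x₀ - P) ν) ≤ 0 := by
            rw [hc₁, hc₂, hc₃]
            exact HBD.arith_sphere hn2 ht0 hts hsR hR (le_of_lt ha1pos) hξval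
          rw [hFval, hvz]
          linarith only [hmain, hεterm]
        · -- inside, on the sphere ∂B_s(P)
          have hx₀Ω : dist x₀ z₀ < R := lt_of_le_of_ne (mem_closedBall.mp hz2) hsph
          have htseq : ‖x₀ - P‖ = s := by
            by_contra hne
            have hlt : dist x₀ P < s := by
              rw [dist_eq_norm]
              exact lt_of_le_of_ne hts hne
            exact hx₀D (by rw [hD]; exact ⟨mem_ball.mpr hlt, mem_ball.mpr hx₀Ω⟩)
          have huM : u x₀ ≤ M := hMK x₀ hx₀K
          have habs : -(@inner ℝ _ _ (x₀ - P) ν) ≤ s := by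
            have h1 := neg_abs_le (@inner ℝ _ _ (x₀ - P) ν)
            linarith only [h1, hξabs, hts]
          have h1 : c₁ * @inner ℝ _ _ (x₀ - P) ν
              + c₃ * (@inner ℝ _ _ (x₀ - P) ν * @inner ℝ _ _ (x₀ - P) ν) ≤ 0 := by
            rw [hc₁, hc₃]
            exact HBD.arith_flat hn2 hξ0 habs hs (le_of_lt ha1pos)
          have h2 : c₂ * ‖x₀ - P‖^2 = -M := by
            rw [hc₂, ha1, htseq]
            field_simp
          rw [hFval]
          linarith only [h1, h2, hεterm, huM]
    -- conclude at x
    have hxx := hx₀max (hDK hxD)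
    have hxx' : u x + HBD.pol P z₀ ν c₁ c₂ c₃ ε (ε * R^2) x
        ≤ u x₀ + HBD.pol P z₀ ν c₁ c₂ c₃ ε (ε * R^2) x₀ := hxx
    have hFx₀' : u x₀ + HBD.pol P z₀ ν c₁ c₂ c₃ ε (ε * R^2) x₀ ≤ 0 := hFx₀
    linarith only [hxx', hFx₀']
  -- pass to the limit ε → 0 and finish
  have hfinal : u x ≤ (n+2) * (‖x - P‖/s) * M := by
    by_contra hcon
    push_neg at hcon
    set B := (n+2) * (‖x - P‖/s) * M with hB
    have hε' : (0:ℝ) < (u x - B)/2 := by linarith only [hcon]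
    set ε' : ℝ := (u x - B)/2 with hεdef'
    clear_value B ε'
    have hε : (0:ℝ) < ε' / R^2 := by positivity
    have hk := hKey (ε'/R^2) hε
    have hkval : u x + (c₁ * @inner ℝ _ _ (x - P) ν + c₂ * ‖x - P‖^2
        + c₃ * (@inner ℝ _ _ (x - P) ν * @inner ℝ _ _ (x - P) ν)
        + ((ε'/R^2) * ‖x - z₀‖^2 - (ε'/R^2) * R^2)) ≤ 0 := by
      have : HBD.pol P z₀ ν c₁ c₂ c₃ (ε'/R^2) ((ε'/R^2) * R^2) x
          = c₁ * @inner ℝ _ _ (x - P) ν + c₂ * ‖x - P‖^2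
            + c₃ * (@inner ℝ _ _ (x - P) ν * @inner ℝ _ _ (x - P) ν)
            + ((ε'/R^2) * ‖x - z₀‖^2 - (ε'/R^2) * R^2) := by
        simp only [HBD.pol]
        ring
      rw [← this]
      exact hk
    have hmain : -(c₁ * @inner ℝ _ _ (x - P) ν + c₂ * ‖x - P‖^2
        + c₃ * (@inner ℝ _ _ (x - P) ν * @inner ℝ _ _ (x - P) ν)) ≤ B := by
      rw [hB, hc₁, hc₂, hc₃, ha1]
      exact HBD.arith_final hn2 hs hxts (norm_nonneg _) hxξt (le_of_lt hM0)
    have hRe : (ε'/R^2) * R^2 = ε' := by field_simp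
    have hRnn : (0:ℝ) ≤ (ε'/R^2) * ‖x - z₀‖^2 := by positivity
    have : u x ≤ B + ε' := by linarith only [hkval, hmain, hRe, hRnn]
    rw [hεdef'] at this
    linarith only [this, hcon]
  rw [Real.rpow_one]
  have hdn : dist x P = ‖x - P‖ := dist_eq_norm x P
  rw [hdn]
  exact hfinal
end

section
/- Let q ≥ 1, 0 ≤ α < 1, and γ < δ* be real numbers, and let u : [γ, δ*] → ℝ be continuously differentiable. Then ( ∫_γ^{δ*} (s−γ)^{−α} |u(s)|^q ds )^{1/q} ≤ ( (δ*−γ)^{1−α}/(1−α) )^{1/q} · |u(δ*)| + (q/(1−α)) · ( ∫_γ^{δ*} (s−γ)^{q−α} |u′(s)|^q ds )^{1/q} (one-dimensional weighted Hardy-type inequality underlying the weighted trace estimates). -/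
open Set MeasureTheory intervalIntegral Filter Topology

/-- Absorption lemma: if `a^q ≤ B + K a^{q-1}` then `a ≤ B^{1/q} + K`. -/
lemma hardy_alg {a B K q : ℝ} (ha : 0 ≤ a) (hB : 0 ≤ B) (hK : 0 ≤ K) (hq : 1 ≤ q)
    (h : a ^ q ≤ B + K * a ^ (q - 1)) : a ≤ B ^ (1 / q) + K := by
  by_contra hcon
  push_neg at hcon
  have hq0 : 0 < q := lt_of_lt_of_le one_pos hq
  have hBq : (0:ℝ) ≤ B ^ (1 / q) := Real.rpow_nonneg hB _
  have hx : 0 < a - K := by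
    have : B ^ (1/q) < a - K := by linarith
    linarith
  have h1 : B < (a - K) ^ q := by
    have := Real.rpow_lt_rpow hBq (by linarith : B ^ (1/q) < a - K) hq0
    rwa [← Real.rpow_mul hB, one_div_mul_cancel hq0.ne', Real.rpow_one] at this
  have h2 : (a - K) ^ q ≤ a ^ (q - 1) * (a - K) := by
    have h3 : (a - K) ^ q = (a - K) ^ (q - 1) * (a - K) := by
      rw [← Real.rpow_add_one hx.ne']; ring_nf
    rw [h3]
    exact mul_le_mul_of_nonneg_right
      (Real.rpow_le_rpow hx.le (by linarith) (by linarith)) hx.le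
  have h4 : a ^ (q - 1) * (a - K) ≤ a ^ q - K * a ^ (q - 1) := by
    have ha' : 0 < a := by linarith
    have h5 : a ^ (q-1) * a = a ^ q := by
      rw [← Real.rpow_add_one ha'.ne']; ring_nf
    nlinarith [h5]
  linarith

lemma hardy_rpow_intint (γ : ℝ) {β : ℝ} (hβ : -1 < β) (x : ℝ) :
    IntervalIntegrable (fun s => (s - γ) ^ β) volume γ x := by
  have h := (intervalIntegrable_rpow' (a := 0) (b := x - γ) hβ).comp_sub_right γ
  simpa using h

lemma hardy_identity (q α γ δs c : ℝ) (hq : 1 ≤ q) (hα1 : α < 1) (hγ : γ < δs)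
    (g : ℝ → ℝ) (hg : Continuous g) (hg0 : ∀ s, 0 ≤ g s) :
    (∫ s in γ..δs, (s - γ) ^ (-α) * (c + ∫ t in s..δs, g t) ^ q) =
      (δs - γ) ^ (1 - α) / (1 - α) * c ^ q +
      q / (1 - α) * ∫ s in γ..δs, (s - γ) ^ (1 - α) * (c + ∫ t in s..δs, g t) ^ (q - 1) * g s := by
  have hα1' : (0:ℝ) < 1 - α := by linarith
  set w : ℝ → ℝ := fun s => c + ∫ t in s..δs, g t with hw_def
  have hw_deriv : ∀ x : ℝ, HasDerivAt w (-g x) x := by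
    intro x
    have h := intervalIntegral.integral_hasDerivAt_left (hg.intervalIntegrable x δs)
      (hg.stronglyMeasurableAtFilter _ _) hg.continuousAt
    have h' := (hasDerivAt_const x c).add h
    rw [zero_add] at h'
    exact h'
  have hw_cont : Continuous w := by
    rw [continuous_iff_continuousAt]; exact fun x => (hw_deriv x).continuousAt
  have hwq_cont : Continuous fun s => w s ^ q :=
    hw_cont.rpow_const fun x => Or.inr (by linarith)
  set f : ℝ → ℝ := fun s => (s - γ) ^ (-α) * w s ^ q with hf_def
  set ρ : ℝ → ℝ := fun s => (s - γ) ^ (1 - α) * w s ^ (q - 1) * g s with hρ_def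
  have hρ_cont : Continuous ρ :=
    (((continuous_id.sub continuous_const).rpow_const fun x => Or.inr (by linarith)).mul
      (hw_cont.rpow_const fun x => Or.inr (by linarith))).mul hg
  have hf_contOn : ContinuousOn f (Ioi γ) := by
    apply ContinuousOn.mul _ hwq_cont.continuousOn
    intro x hx
    exact (ContinuousAt.rpow_const (continuousAt_id.sub continuousAt_const)
      (Or.inl (sub_ne_zero.mpr (ne_of_gt hx)))).continuousWithinAt
  have hf_int : ∀ x, IntervalIntegrable f volume γ x := fun x =>
    (hardy_rpow_intint γ (by linarith) x).mul_continuousOn hwq_cont.continuousOn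
  set Φ : ℝ → ℝ := fun x => ∫ s in γ..x, f s with hΦ_def
  set Ψ : ℝ → ℝ := fun x =>
    (x - γ) ^ (1 - α) * w x ^ q / (1 - α) + q / (1 - α) * ∫ s in γ..x, ρ s with hΨ_def
  have hΦd : ∀ x ∈ Ioi γ, HasDerivAt Φ (f x) x := by
    intro x hx
    exact intervalIntegral.integral_hasDerivAt_right (hf_int x)
      (hf_contOn.stronglyMeasurableAtFilter isOpen_Ioi x hx)
      ((hf_contOn x hx).continuousAt (isOpen_Ioi.mem_nhds hx))
  have hΨd : ∀ x ∈ Ioi γ, HasDerivAt Ψ (f x) x := by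
    intro x hx
    have hxγ : x - γ ≠ 0 := sub_ne_zero.mpr (ne_of_gt hx)
    have h1 : HasDerivAt (fun y : ℝ => (y - γ) ^ (1 - α)) ((1 - α) * (x - γ) ^ (-α)) x := by
      have h := (Real.hasDerivAt_rpow_const (x := x - γ) (p := 1 - α) (Or.inl hxγ)).comp x
        ((hasDerivAt_id x).sub_const γ)
      have he : (1 : ℝ) - α - 1 = -α := by ring
      simpa [he, Function.comp_def] using h
    have h2 : HasDerivAt (fun y : ℝ => w y ^ q) (q * w x ^ (q - 1) * -g x) x := by
      have h := (Real.hasDerivAt_rpow_const (x := w x) (p := q) (Or.inr hq)).comp x (hw_deriv x)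
      simpa [mul_assoc, Function.comp_def] using h
    have h3 : HasDerivAt (fun y : ℝ => ∫ s in γ..y, ρ s) (ρ x) x :=
      intervalIntegral.integral_hasDerivAt_right (hρ_cont.intervalIntegrable γ x)
        (hρ_cont.stronglyMeasurableAtFilter _ _) hρ_cont.continuousAt
    have h4 := ((h1.mul h2).div_const (1 - α)).add (h3.const_mul (q / (1 - α)))
    refine h4.congr_deriv ?_
    simp only [hf_def, hρ_def]
    field_simp
    ring
  have key : ∀ x ∈ Ioc γ δs, Φ δs - Ψ δs = Φ x - Ψ x := by
    intro x hx
    have h := constant_of_has_deriv_right_zero (f := fun y => Φ y - Ψ y) (a := x) (b := δs)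
      (fun y hy => (((hΦd y (lt_of_lt_of_le hx.1 hy.1)).sub
        (hΨd y (lt_of_lt_of_le hx.1 hy.1))).continuousAt).continuousWithinAt)
      (fun y hy => by
        simpa [Pi.sub_def] using (((hΦd y (lt_of_lt_of_le hx.1 hy.1)).sub
          (hΨd y (lt_of_lt_of_le hx.1 hy.1))).hasDerivWithinAt))
    exact h δs ⟨hx.2, le_refl δs⟩
  have hint : IntegrableOn f (Icc γ δs) := (integrableOn_Icc_iff_integrableOn_Ioc (by finiteness)).2
    ((intervalIntegrable_iff_integrableOn_Ioc_of_le hγ.le).1 (hf_int δs))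
  have hΦlim : Tendsto Φ (𝓝[>] γ) (𝓝 0) := by
    have hcΦ : ContinuousOn Φ (Icc γ δs) := by
      have h := continuousOn_primitive_interval (a := γ) (b := δs) (f := f) (μ := volume)
        (by rwa [uIcc_of_le hγ.le])
      rwa [uIcc_of_le hγ.le] at h
    have hc : ContinuousWithinAt Φ (Icc γ δs) γ := hcΦ γ ⟨le_refl γ, hγ.le⟩
    have h0 : Φ γ = 0 := intervalIntegral.integral_same
    have := hc.tendsto
    rw [h0] at this
    rw [← nhdsWithin_Ioc_eq_nhdsGT hγ]
    exact this.mono_left (nhdsWithin_mono γ Ioc_subset_Icc_self)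
  have hΨlim : Tendsto Ψ (𝓝[>] γ) (𝓝 0) := by
    have t1 : Tendsto (fun x : ℝ => (x - γ) ^ (1 - α) * w x ^ q / (1 - α)) (𝓝 γ) (𝓝 0) := by
      have hc : Continuous fun x : ℝ => (x - γ) ^ (1 - α) * w x ^ q / (1 - α) :=
        (((continuous_id.sub continuous_const).rpow_const fun x => Or.inr hα1'.le).mul
          hwq_cont).div_const (1 - α)
      have := hc.continuousAt (x := γ)
      have hv : (fun x : ℝ => (x - γ) ^ (1 - α) * w x ^ q / (1 - α)) γ = 0 := by
        show (γ - γ : ℝ) ^ (1 - α) * w γ ^ q / (1 - α) = 0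
        rw [sub_self, Real.zero_rpow (ne_of_gt hα1')]; ring
      unfold ContinuousAt at this
      rwa [hv] at this
    have t2 : Tendsto (fun x : ℝ => q / (1 - α) * ∫ s in γ..x, ρ s) (𝓝 γ) (𝓝 0) := by
      have h3 : ContinuousAt (fun y : ℝ => ∫ s in γ..y, ρ s) γ :=
        (intervalIntegral.integral_hasDerivAt_right (hρ_cont.intervalIntegrable γ γ)
          (hρ_cont.stronglyMeasurableAtFilter _ _) hρ_cont.continuousAt).continuousAt
      have h4 := h3.const_mul (q / (1 - α))
      unfold ContinuousAt at h4
      simpa [intervalIntegral.integral_same] using h4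
    have := (t1.add t2).mono_left (nhdsWithin_le_nhds (a := γ) (s := Ioi γ))
    simpa using this
  have hconst : Tendsto (fun x => Φ x - Ψ x) (𝓝[>] γ) (𝓝 (Φ δs - Ψ δs)) := by
    refine tendsto_const_nhds.congr' ?_
    filter_upwards [Ioc_mem_nhdsGT hγ] with x hx using key x hx
  have hzero : Tendsto (fun x => Φ x - Ψ x) (𝓝[>] γ) (𝓝 0) := by
    simpa using hΦlim.sub hΨlim
  have hmain : Φ δs = Ψ δs := by
    have := tendsto_nhds_unique hconst hzero
    linarith
  have hΨval : Ψ δs = (δs - γ) ^ (1 - α) / (1 - α) * c ^ q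
      + q / (1 - α) * ∫ s in γ..δs, ρ s := by
    have hwδ : w δs = c := by simp [hw_def]
    simp only [hΨ_def, hwδ]
    ring
  calc (∫ s in γ..δs, (s - γ) ^ (-α) * w s ^ q) = Φ δs := rfl
    _ = Ψ δs := hmain
    _ = _ := by rw [hΨval]

lemma hardy_memLp {p : ℝ} (hp : 0 < p) {f : ℝ → ℝ} {μ : Measure ℝ}
    (hf : AEStronglyMeasurable f μ) (hint : Integrable (fun x => |f x| ^ p) μ) :
    MemLp f (ENNReal.ofReal p) μ := by
  have h0 : ENNReal.ofReal p ≠ 0 := by simp [hp, not_le.mpr hp]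
  have ht : ENNReal.ofReal p ≠ ⊤ := ENNReal.ofReal_ne_top
  refine (memLp_norm_rpow_iff (p := ENNReal.ofReal p) (q := ENNReal.ofReal p) hf h0 ht).1 ?_
  rw [ENNReal.div_self h0 ht, ENNReal.toReal_ofReal hp.le, memLp_one_iff_integrable]
  simpa [Real.norm_eq_abs] using hint

lemma hardy_holder (q α γ δs : ℝ) (hq : 1 ≤ q) (hα0 : 0 ≤ α) (hα1 : α < 1) (hγ : γ < δs)
    (w g : ℝ → ℝ) (hw_cont : Continuous w) (hw_pos : ∀ s ∈ Icc γ δs, 0 < w s)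
    (hg : Continuous g) (hg0 : ∀ s, 0 ≤ g s) :
    (∫ s in γ..δs, (s - γ) ^ (1 - α) * w s ^ (q - 1) * g s) ≤
      (∫ s in γ..δs, (s - γ) ^ (-α) * w s ^ q) ^ (1 - 1/q) *
      (∫ s in γ..δs, (s - γ) ^ (q - α) * g s ^ q) ^ (1/q) := by
  rcases eq_or_lt_of_le hq with hq1 | hq1
  · subst hq1
    norm_num
  have hq0 : (0:ℝ) < q := by linarith
  have hq1' : (0:ℝ) < q - 1 := by linarith
  have hne : q ≠ 0 := ne_of_gt hq0
  have hne1 : q - 1 ≠ 0 := by intro h; rw [sub_eq_zero] at h; exact absurd h.symm (ne_of_lt hq1)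
  set μ : Measure ℝ := volume.restrict (Ioc γ δs) with hμ
  set p' : ℝ := q / (q - 1) with hp'
  have hpq : Real.HolderConjugate p' q := by
    rw [Real.holderConjugate_iff]
    constructor
    · rw [hp']; rw [lt_div_iff₀ hq1']; linarith
    · rw [hp']; field_simp; ring
  set F : ℝ → ℝ := fun s => (s - γ) ^ (-(α * (q - 1) / q)) * w s ^ (q - 1) with hF
  set G : ℝ → ℝ := fun s => (s - γ) ^ ((q - α) / q) * g s with hG
  have hF0 : ∀ s ∈ Ioc γ δs, 0 ≤ F s := fun s hs =>
    mul_nonneg (Real.rpow_nonneg (by linarith [hs.1] : (0:ℝ) ≤ s - γ) _)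
      (Real.rpow_nonneg (hw_pos s ⟨hs.1.le, hs.2⟩).le _)
  have hG0 : ∀ s ∈ Ioc γ δs, 0 ≤ G s := fun s hs =>
    mul_nonneg (Real.rpow_nonneg (by linarith [hs.1] : (0:ℝ) ≤ s - γ) _) (hg0 s)
  -- pointwise identities on Ioc
  have hFp : ∀ s ∈ Ioc γ δs, F s ^ p' = (s - γ) ^ (-α) * w s ^ q := by
    intro s hs
    have h1 : (0:ℝ) < s - γ := sub_pos.2 hs.1
    rw [hF, Real.mul_rpow (Real.rpow_nonneg h1.le _)
      (Real.rpow_nonneg (hw_pos s ⟨hs.1.le, hs.2⟩).le _),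
      ← Real.rpow_mul h1.le, ← Real.rpow_mul (hw_pos s ⟨hs.1.le, hs.2⟩).le]
    congr 1
    · congr 1
      rw [hp']; field_simp
    · congr 1
      rw [hp', mul_comm, div_mul_cancel₀ q hne1]
  have hGq : ∀ s ∈ Ioc γ δs, G s ^ q = (s - γ) ^ (q - α) * g s ^ q := by
    intro s hs
    have h1 : (0:ℝ) < s - γ := sub_pos.2 hs.1
    rw [hG, Real.mul_rpow (Real.rpow_nonneg h1.le _) (hg0 s), ← Real.rpow_mul h1.le]
    congr 2
    field_simp
  have hFG : ∀ s ∈ Ioc γ δs, F s * G s = (s - γ) ^ (1 - α) * w s ^ (q - 1) * g s := by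
    intro s hs
    have h1 : (0:ℝ) < s - γ := sub_pos.2 hs.1
    have h2 : (s - γ) ^ (1 - α) = (s - γ) ^ (-(α * (q - 1) / q)) * (s - γ) ^ ((q - α) / q) := by
      rw [← Real.rpow_add h1]
      congr 1; field_simp; ring
    rw [hF, hG, h2]; ring
  -- measurability
  have hFmeas : AEStronglyMeasurable F μ := by
    refine ContinuousOn.aestronglyMeasurable ?_ measurableSet_Ioc
    refine ContinuousOn.mul ?_ ((hw_cont.rpow_const fun x => Or.inr hq1'.le).continuousOn)
    intro x hx
    exact (ContinuousAt.rpow_const (continuousAt_id.sub continuousAt_const)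
      (Or.inl (sub_ne_zero.mpr (ne_of_gt hx.1)))).continuousWithinAt
  have hGcont : Continuous G :=
    ((continuous_id.sub continuous_const).rpow_const fun x =>
      Or.inr (div_nonneg (by linarith) hq0.le)).mul hg
  -- integrability of the q-th powers
  have hwq_cont : Continuous fun s => w s ^ q := hw_cont.rpow_const fun x => Or.inr hq0.le
  have hA_int : IntegrableOn (fun s => (s - γ) ^ (-α) * w s ^ q) (Ioc γ δs) :=
    (intervalIntegrable_iff_integrableOn_Ioc_of_le hγ.le).1
      ((hardy_rpow_intint γ (by linarith) δs).mul_continuousOn hwq_cont.continuousOn)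
  have hC_int : IntegrableOn (fun s => (s - γ) ^ (q - α) * g s ^ q) (Ioc γ δs) :=
    (intervalIntegrable_iff_integrableOn_Ioc_of_le hγ.le).1
      ((hardy_rpow_intint γ (by linarith) δs).mul_continuousOn
        ((hg.rpow_const fun x => Or.inr hq0.le).continuousOn))
  have hFmem : MemLp F (ENNReal.ofReal p') μ := by
    refine hardy_memLp hpq.pos hFmeas ?_
    refine (Integrable.congr hA_int ?_)
    refine ae_restrict_of_forall_mem measurableSet_Ioc fun s hs => ?_
    show (s - γ) ^ (-α) * w s ^ q = |F s| ^ p'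
    rw [abs_of_nonneg (hF0 s hs)]
    exact (hFp s hs).symm
  have hGmem : MemLp G (ENNReal.ofReal q) μ := by
    refine hardy_memLp hq0 hGcont.aestronglyMeasurable.restrict ?_
    refine (Integrable.congr hC_int ?_)
    refine ae_restrict_of_forall_mem measurableSet_Ioc fun s hs => ?_
    show (s - γ) ^ (q - α) * g s ^ q = |G s| ^ q
    rw [abs_of_nonneg (hG0 s hs)]
    exact (hGq s hs).symm
  have holder := MeasureTheory.integral_mul_le_Lp_mul_Lq_of_nonneg hpq
    (ae_restrict_of_forall_mem measurableSet_Ioc hF0)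
    (ae_restrict_of_forall_mem measurableSet_Ioc hG0) hFmem hGmem
  -- rewrite the three integrals
  have e1 : ∫ a, F a * G a ∂μ = ∫ s in γ..δs, (s - γ) ^ (1 - α) * w s ^ (q - 1) * g s := by
    rw [intervalIntegral.integral_of_le hγ.le]
    exact setIntegral_congr_fun measurableSet_Ioc hFG
  have e2 : ∫ a, F a ^ p' ∂μ = ∫ s in γ..δs, (s - γ) ^ (-α) * w s ^ q := by
    rw [intervalIntegral.integral_of_le hγ.le]
    exact setIntegral_congr_fun measurableSet_Ioc hFp
  have e3 : ∫ a, G a ^ q ∂μ = ∫ s in γ..δs, (s - γ) ^ (q - α) * g s ^ q := by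
    rw [intervalIntegral.integral_of_le hγ.le]
    exact setIntegral_congr_fun measurableSet_Ioc hGq
  have e4 : 1 / p' = 1 - 1 / q := by
    rw [hp']; field_simp
  rw [e1, e2, e3, e4] at holder
  exact holder

lemma hardy_eps {a b : ℝ} (h : ∀ ε > (0:ℝ), a ≤ b + ε) : a ≤ b := by
  by_contra hc; push_neg at hc
  have := h ((a - b)/2) (by linarith)
  linarith

/-- One-dimensional weighted Hardy-type inequality: for `q ≥ 1`, `0 ≤ α < 1`, `γ < δ*` and a
continuously differentiable `u` on `[γ, δ*]`,
`(∫_γ^{δ*} (s−γ)^{−α} |u|^q)^{1/q} ≤ ((δ*−γ)^{1−α}/(1−α))^{1/q} |u(δ*)|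
  + (q/(1−α)) (∫_γ^{δ*} (s−γ)^{q−α} |u′|^q)^{1/q}`. -/
theorem weighted_hardy_inequality
    (q α γ δs : ℝ) (hq : 1 ≤ q) (hα0 : 0 ≤ α) (hα1 : α < 1) (hγ : γ < δs)
    (u u' : ℝ → ℝ)
    (hderiv : ∀ s ∈ Set.Icc γ δs, HasDerivWithinAt u (u' s) (Set.Icc γ δs) s)
    (hcont : ContinuousOn u' (Set.Icc γ δs)) :
    (∫ s in γ..δs, (s - γ) ^ (-α) * |u s| ^ q) ^ (1 / q) ≤
      ((δs - γ) ^ (1 - α) / (1 - α)) ^ (1 / q) * |u δs| +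
      q / (1 - α) * (∫ s in γ..δs, (s - γ) ^ (q - α) * |u' s| ^ q) ^ (1 / q) := by
  have hα1' : (0:ℝ) < 1 - α := by linarith
  have hq0 : (0:ℝ) < q := lt_of_lt_of_le one_pos hq
  -- a globally continuous nonnegative extension of |u'|
  set π : ℝ → ℝ := fun t => max γ (min t δs) with hπ_def
  have hπcont : Continuous π := continuous_const.max (continuous_id.min continuous_const)
  have hπmem : ∀ t, π t ∈ Icc γ δs := fun t =>
    ⟨le_max_left _ _, max_le hγ.le (min_le_right _ _)⟩
  set g : ℝ → ℝ := fun t => |u' (π t)| with hg_def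
  have hg : Continuous g := by
    have h1 : ContinuousOn (fun t => u' (π t)) univ :=
      hcont.comp hπcont.continuousOn fun t _ => hπmem t
    exact (continuousOn_univ.1 h1).abs
  have hg0 : ∀ s, 0 ≤ g s := fun s => abs_nonneg _
  have hgeq : ∀ s ∈ Icc γ δs, g s = |u' s| := by
    intro s hs
    have : π s = s := by
      rw [hπ_def]; simp only []
      rw [min_eq_left hs.2, max_eq_right hs.1]
    rw [hg_def]; simp only []; rw [this]
  have hu_cont : ContinuousOn u (Icc γ δs) := fun s hs => (hderiv s hs).continuousWithinAt
  -- pointwise bound |u s| ≤ |u δs| + ∫_s^δs g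
  have hbound : ∀ s ∈ Icc γ δs, |u s| ≤ |u δs| + ∫ t in s..δs, g t := by
    intro s hs
    have hFTC : ∫ t in s..δs, u' t = u δs - u s := by
      apply intervalIntegral.integral_eq_sub_of_hasDeriv_right_of_le hs.2
        (hu_cont.mono (Icc_subset_Icc hs.1 le_rfl))
      · intro x hx
        refine (hderiv x ⟨hs.1.trans hx.1.le, hx.2.le⟩).mono_of_mem_nhdsWithin ?_
        exact mem_of_superset (Ioc_mem_nhdsGT hx.2)
          (Ioc_subset_Icc_self.trans (Icc_subset_Icc (hs.1.trans hx.1.le) le_rfl))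
      · apply ContinuousOn.intervalIntegrable
        rw [uIcc_of_le hs.2]
        exact hcont.mono (Icc_subset_Icc hs.1 le_rfl)
    have h1 : |∫ t in s..δs, u' t| ≤ ∫ t in s..δs, |u' t| :=
      intervalIntegral.abs_integral_le_integral_abs hs.2
    have h2 : (∫ t in s..δs, |u' t|) = ∫ t in s..δs, g t := by
      apply intervalIntegral.integral_congr
      intro t ht
      rw [uIcc_of_le hs.2] at ht
      exact (hgeq t ⟨hs.1.trans ht.1, ht.2⟩).symm
    have h3 : |u s| ≤ |u δs| + |∫ t in s..δs, u' t| := by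
      rw [hFTC]
      calc |u s| = |u δs - (u δs - u s)| := by congr 1; ring
        _ ≤ |u δs| + |u δs - u s| := abs_sub _ _
    linarith
  -- integrability and continuity facts
  have huq_contOn : ContinuousOn (fun s => |u s| ^ q) (Icc γ δs) :=
    (hu_cont.abs).rpow_const fun x _ => Or.inr hq0.le
  have hLHS_int : IntervalIntegrable (fun s => (s - γ) ^ (-α) * |u s| ^ q) volume γ δs := by
    refine (hardy_rpow_intint γ (by linarith) δs).mul_continuousOn ?_
    rwa [uIcc_of_le hγ.le]
  have hLHS0 : 0 ≤ ∫ s in γ..δs, (s - γ) ^ (-α) * |u s| ^ q :=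
    intervalIntegral.integral_nonneg hγ.le fun s hs =>
      mul_nonneg (Real.rpow_nonneg (by linarith [hs.1]) _) (Real.rpow_nonneg (abs_nonneg _) _)
  have hCq0 : 0 ≤ ∫ s in γ..δs, (s - γ) ^ (q - α) * g s ^ q :=
    intervalIntegral.integral_nonneg hγ.le fun s hs =>
      mul_nonneg (Real.rpow_nonneg (by linarith [hs.1]) _) (Real.rpow_nonneg (hg0 s) _)
  -- the main estimate, for every ε > 0
  have main : ∀ ε : ℝ, 0 < ε →
      (∫ s in γ..δs, (s - γ) ^ (-α) * |u s| ^ q) ^ (1/q) ≤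
        ((δs - γ) ^ (1 - α) / (1 - α)) ^ (1/q) * (ε + |u δs|) +
        q / (1 - α) * (∫ s in γ..δs, (s - γ) ^ (q - α) * g s ^ q) ^ (1/q) := by
    intro ε hε
    set c : ℝ := ε + |u δs| with hc_def
    have hc : 0 < c := by positivity
    set w : ℝ → ℝ := fun s => c + ∫ t in s..δs, g t with hw_def
    have hw_cont : Continuous w := by
      rw [continuous_iff_continuousAt]
      intro x
      have h := intervalIntegral.integral_hasDerivAt_left (hg.intervalIntegrable x δs)
        (hg.stronglyMeasurableAtFilter _ _) hg.continuousAt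
      exact (((hasDerivAt_const x c).add h).continuousAt)
    have hw_pos : ∀ s ∈ Icc γ δs, 0 < w s := by
      intro s hs
      have : 0 ≤ ∫ t in s..δs, g t :=
        intervalIntegral.integral_nonneg hs.2 fun t _ => hg0 t
      rw [hw_def]; dsimp only; linarith
    have hid := hardy_identity q α γ δs c hq hα1 hγ g hg hg0
    have hhold := hardy_holder q α γ δs hq hα0 hα1 hγ w g hw_cont hw_pos hg hg0
    set A : ℝ := ∫ s in γ..δs, (s - γ) ^ (-α) * w s ^ q with hA_def
    set Cq : ℝ := ∫ s in γ..δs, (s - γ) ^ (q - α) * g s ^ q with hCq_def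
    have hA0 : 0 ≤ A :=
      intervalIntegral.integral_nonneg hγ.le fun s hs =>
        mul_nonneg (Real.rpow_nonneg (by linarith [hs.1]) _)
          (Real.rpow_nonneg (hw_pos s hs).le _)
    -- monotonicity: LHS integral ≤ A
    have hw_int : IntervalIntegrable (fun s => (s - γ) ^ (-α) * w s ^ q) volume γ δs :=
      (hardy_rpow_intint γ (by linarith) δs).mul_continuousOn
        (hw_cont.rpow_const fun x => Or.inr hq0.le).continuousOn
    have hmono : (∫ s in γ..δs, (s - γ) ^ (-α) * |u s| ^ q) ≤ A := by
      refine intervalIntegral.integral_mono_on hγ.le hLHS_int hw_int fun s hs => ?_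
      refine mul_le_mul_of_nonneg_left ?_ (Real.rpow_nonneg (by linarith [hs.1]) _)
      refine Real.rpow_le_rpow (abs_nonneg _) ?_ hq0.le
      have h1 := hbound s hs
      have h2 : w s = c + ∫ t in s..δs, g t := rfl
      rw [h2, hc_def]; linarith
    -- identity + Hölder
    have step : A ≤ (δs - γ) ^ (1 - α) / (1 - α) * c ^ q
        + q / (1 - α) * (A ^ (1 - 1/q) * Cq ^ (1/q)) := by
      conv_lhs => rw [hid]
      have hwr : (∫ s in γ..δs, (s - γ) ^ (1 - α) * (c + ∫ t in s..δs, g t) ^ (q - 1) * g s)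
          = ∫ s in γ..δs, (s - γ) ^ (1 - α) * w s ^ (q - 1) * g s := rfl
      rw [hwr]
      have hK : (0:ℝ) ≤ q / (1 - α) := div_nonneg hq0.le hα1'.le
      exact add_le_add_right (mul_le_mul_of_nonneg_left hhold hK) _
    -- absorption
    have halg : A ^ (1/q) ≤ ((δs - γ) ^ (1 - α) / (1 - α) * c ^ q) ^ (1/q)
        + q / (1 - α) * Cq ^ (1/q) := by
      refine hardy_alg (Real.rpow_nonneg hA0 _) ?_ ?_ hq ?_
      · exact mul_nonneg (div_nonneg (Real.rpow_nonneg (by linarith) _) hα1'.le)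
          (Real.rpow_nonneg hc.le _)
      · exact mul_nonneg (div_nonneg hq0.le hα1'.le) (Real.rpow_nonneg hCq0 _)
      · have e1 : (A ^ (1/q)) ^ q = A := by
          rw [← Real.rpow_mul hA0, one_div_mul_cancel hq0.ne', Real.rpow_one]
        have e2 : (A ^ (1/q)) ^ (q - 1) = A ^ (1 - 1/q) := by
          rw [← Real.rpow_mul hA0]
          congr 1
          field_simp
        rw [e1, e2]
        calc A ≤ (δs - γ) ^ (1 - α) / (1 - α) * c ^ q
            + q / (1 - α) * (A ^ (1 - 1/q) * Cq ^ (1/q)) := step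
          _ = (δs - γ) ^ (1 - α) / (1 - α) * c ^ q
            + q / (1 - α) * Cq ^ (1/q) * A ^ (1 - 1/q) := by ring
    -- simplify B^{1/q}
    have hBq : ((δs - γ) ^ (1 - α) / (1 - α) * c ^ q) ^ (1/q)
        = ((δs - γ) ^ (1 - α) / (1 - α)) ^ (1/q) * c := by
      rw [Real.mul_rpow (div_nonneg (Real.rpow_nonneg (by linarith) _) hα1'.le)
        (Real.rpow_nonneg hc.le _), ← Real.rpow_mul hc.le,
        mul_one_div, div_self hq0.ne', Real.rpow_one]
    have hfinal := le_trans (Real.rpow_le_rpow hLHS0 hmono (by positivity)) halg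
    rw [hBq] at hfinal
    exact hfinal
  -- let ε → 0
  have hCeq : (∫ s in γ..δs, (s - γ) ^ (q - α) * g s ^ q)
      = ∫ s in γ..δs, (s - γ) ^ (q - α) * |u' s| ^ q := by
    apply intervalIntegral.integral_congr
    intro s hs
    rw [uIcc_of_le hγ.le] at hs
    show (s - γ) ^ (q - α) * g s ^ q = (s - γ) ^ (q - α) * |u' s| ^ q
    rw [hgeq s hs]
  set D : ℝ := ((δs - γ) ^ (1 - α) / (1 - α)) ^ (1/q) with hD_def
  have hD : 0 < D :=
    Real.rpow_pos_of_pos (div_pos (Real.rpow_pos_of_pos (by linarith) _) hα1') _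
  refine hardy_eps fun ε hε => ?_
  have h := main (ε / D) (div_pos hε hD)
  rw [hCeq] at h
  have hDε : D * (ε / D + |u δs|) = D * |u δs| + ε := by
    field_simp
    ring
  rw [hDε] at h
  linarith
end
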